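/- arXiv:1711.03848 — 4 statements merged into one kernel-verified Lean document; each statement's English description precedes it below -/
import Mathlib

section
/- Let α ∈ [0,1] with α ≠ 1/2, let n ≥ 2 be even, and let a_0, …, a_n be independent real-valued random variables with P(a_i > 0) = α and P(a_i < 0) = 1 − α for every i. If k is even, 0 ≤ k ≤ n, and k = 2k′, then the probability p_{k,n} of exactly k sign changes equals Σ_{m=n/2}^{n} ((n−k+1)/(2m−n+1))·M(m; k′, n−k′−m, 2m−n)·(−1)^{n−k′−m}·(α(1−α))^{n−m}, where M(m; i,j,l) = m!/(i!·j!·l!) is the multinomial coefficient for i+j+l = m, taken to be 0 whenever any of i, j, l is negative. -/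
open MeasureTheory ProbabilityTheory

/-- Number of sign changes of the sequence `a 0, a 1, …, a N` (there are `N`
consecutive pairs): the number of indices `0 ≤ i ≤ N - 1` with `a i * a (i+1) < 0`. -/
noncomputable def signChanges {Ω : Type*} (a : ℕ → Ω → ℝ) (N : ℕ) (ω : Ω) : ℕ :=
  ((Finset.range N).filter fun i => a i ω * a (i + 1) ω < 0).card

/-- `M(m; i, j, l)`: the multinomial coefficient `m!/(i!·j!·l!)` when
`i, j, l ≥ 0` and `i + j + l = m`, and `0` whenever any of `i, j, l` is negative. -/
noncomputable def trinom (m : ℕ) (i j l : ℤ) : ℝ :=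
  if 0 ≤ i ∧ 0 ≤ j ∧ 0 ≤ l ∧ i + j + l = m then
    (m.factorial : ℝ) /
      ((i.toNat.factorial : ℝ) * (j.toNat.factorial : ℝ) * (l.toNat.factorial : ℝ))
  else 0

noncomputable def invf : ℤ → ℝ := fun x => if 0 ≤ x then ((x.toNat).factorial : ℝ)⁻¹ else 0

lemma invf_succ (x : ℤ) : invf x = (x + 1) * invf (x + 1) := by
  unfold invf
  rcases lt_trichotomy x (-1) with h | h | h
  · rw [if_neg (by omega), if_neg (by omega)]; ring
  · subst h; norm_num
  · have hx : 0 ≤ x := by omega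
    rw [if_pos hx, if_pos (by omega)]
    have h1 : (x + 1).toNat = x.toNat + 1 := by omega
    rw [h1, Nat.factorial_succ]
    have h2 : ((x.toNat : ℝ) + 1) ≠ 0 := by positivity
    have h3 : (x : ℝ) + 1 = (x.toNat : ℝ) + 1 := by
      rw [← Int.cast_natCast, Int.toNat_of_nonneg hx]
    rw [h3]
    push_cast
    rw [mul_inv]
    field_simp

lemma invf_succ₂ (x : ℤ) : invf x = (x + 1) * (x + 2) * invf (x + 2) := by
  rw [invf_succ x, invf_succ (x + 1)]
  have : x + 1 + 1 = x + 2 := by ring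
  rw [this]; push_cast; ring

lemma invf_neg {x : ℤ} (h : x < 0) : invf x = 0 := by
  unfold invf; rw [if_neg (by omega)]

lemma invf_natCast (x : ℕ) : invf x = ((x.factorial : ℝ))⁻¹ := by
  unfold invf; rw [if_pos (by positivity), Int.toNat_natCast]

lemma trinom_eq_invf (m : ℕ) (i j l : ℤ) (h : i + j + l = m) :
    trinom m i j l = (m.factorial : ℝ) * invf i * invf j * invf l := by
  unfold trinom
  by_cases hi : 0 ≤ i
  · by_cases hj : 0 ≤ j
    · by_cases hl : 0 ≤ l
      · rw [if_pos ⟨hi, hj, hl, h⟩]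
        unfold invf
        rw [if_pos hi, if_pos hj, if_pos hl]
        field_simp
      · rw [if_neg (by tauto), invf_neg (show l < 0 by omega)]; ring
    · rw [if_neg (by tauto), invf_neg (show j < 0 by omega)]; ring
  · rw [if_neg (by tauto), invf_neg (show i < 0 by omega)]; ring

lemma sgn_add_one (z : ℤ) : (-1:ℝ)^(z+1) = -((-1:ℝ)^z) := by
  rw [zpow_add₀ (by norm_num : (-1:ℝ) ≠ 0)]; norm_num

lemma sgn_add_two (z : ℤ) : (-1:ℝ)^(z+2) = (-1:ℝ)^z := by
  rw [zpow_add₀ (by norm_num : (-1:ℝ) ≠ 0)]; norm_num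

noncomputable def dd (N : ℕ) (κ : ℤ) (j : ℕ) : ℝ :=
  ((N:ℝ) - 2*(κ:ℝ) + 1) / ((N:ℝ) - 2*(j:ℝ) + 1) *
    trinom (N - j) κ ((j:ℤ) - κ) ((N:ℤ) - 2*(j:ℤ)) * (-1:ℝ)^((j:ℤ) - (κ:ℤ))

lemma scalar_core (M J K f i b r s : ℝ) (hA : 2*M - 2*J + 1 ≠ 0) (hB : 2*M - 2*J - 1 ≠ 0) :
    (2*M - 2*K + 5)/(2*M - 2*J + 1) * ((2*M - J + 1)*(2*M - J + 2)*f) * i * b * r * s =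
    (2*M - 2*K + 3)/(2*M - 2*J - 1) * f * i * b * ((2*M - 2*J - 1)*(2*M - 2*J)*r) * s
    - 2*((2*M - 2*K + 3)/(2*M - 2*J + 1) * ((2*M - J + 1)*f) * i * ((J - K + 2)*b) * r * (-s))
    + 2*((2*M - 2*K + 5)/(2*M - 2*J + 1) * ((2*M - J + 1)*f) * (K*i) * b * r * s)
    - (2*M - 2*K + 1)/(2*M - 2*J + 1) * f * i * ((J - K + 1)*(J - K + 2)*b) * r * s
    + 2*((2*M - 2*K + 3)/(2*M - 2*J + 1) * f * (K*i) * ((J - K + 2)*b) * r * (-s))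
    - (2*M - 2*K + 5)/(2*M - 2*J + 1) * f * ((K - 1)*K*i) * b * r * s := by
  simp only [div_eq_mul_inv]
  have e : (2*M - 2*J - 1)⁻¹ * (2*M - 2*J - 1) = 1 := inv_mul_cancel₀ hB
  have eA : (2*M - 2*J + 1)⁻¹ * (2*M - 2*J + 1) = 1 := inv_mul_cancel₀ hA
  linear_combination -(2*M - 2*K + 3) * f * i * b * (2*M - 2*J)*r * s * e
    - (4*M*K + 4*M*J - 6*M - 4*M^2 - 4*K*J + 6*J) * f * i * b * r * s * eA

set_option maxHeartbeats 1600000 in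
lemma dd_core (m j : ℕ) (κ : ℤ) (hj : j ≤ 2*m) :
    dd (2*m+4) κ (j+2) =
      dd (2*m+2) κ (j+2) - 2*dd (2*m+2) κ (j+1) + 2*dd (2*m+2) (κ-1) (j+1)
        - dd (2*m) κ j + 2*dd (2*m) (κ-1) j - dd (2*m) (κ-2) j := by
  have h1 : (2*(m:ℤ) - 2*(j:ℤ) + 1) ≠ 0 := by omega
  have h2 : (2*(m:ℤ) - 2*(j:ℤ) - 1) ≠ 0 := by omega
  have hd1 : 2*(m:ℝ) - 2*(j:ℝ) + 1 ≠ 0 := by exact_mod_cast (Int.cast_ne_zero (α := ℝ)).2 h1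
  have hd2 : 2*(m:ℝ) - 2*(j:ℝ) - 1 ≠ 0 := by exact_mod_cast (Int.cast_ne_zero (α := ℝ)).2 h2
  simp only [dd]
  rw [trinom_eq_invf _ _ _ _ (by omega), trinom_eq_invf _ _ _ _ (by omega),
      trinom_eq_invf _ _ _ _ (by omega), trinom_eq_invf _ _ _ _ (by omega),
      trinom_eq_invf _ _ _ _ (by omega), trinom_eq_invf _ _ _ _ (by omega),
      trinom_eq_invf _ _ _ _ (by omega)]
  -- normalize factorial indices
  rw [show 2*m+4 - (j+2) = 2*m - j + 1 + 1 from by omega,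
      show 2*m+2 - (j+2) = 2*m - j from by omega,
      show 2*m+2 - (j+1) = 2*m - j + 1 from by omega,
      Nat.factorial_succ (2*m - j + 1), Nat.factorial_succ (2*m - j)]
  -- normalize invf args and sign exponents
  rw [show ((j:ℕ)+2:ℕ) = j+2 from rfl]
  rw [show (((j+2:ℕ)):ℤ) - κ = (j:ℤ) - κ + 2 from by push_cast; ring,
      show (((j+1:ℕ)):ℤ) - κ = (j:ℤ) - κ + 1 from by push_cast; ring,
      show (((j+1:ℕ)):ℤ) - (κ-1) = (j:ℤ) - κ + 2 from by push_cast; ring,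
      show ((j:ℤ)) - (κ-1) = (j:ℤ) - κ + 1 from by ring,
      show ((j:ℤ)) - (κ-2) = (j:ℤ) - κ + 2 from by ring,
      show ((2*m+4:ℕ):ℤ) - 2*((j+2:ℕ):ℤ) = 2*(m:ℤ) - 2*(j:ℤ) from by push_cast; ring,
      show ((2*m+2:ℕ):ℤ) - 2*((j+2:ℕ):ℤ) = 2*(m:ℤ) - 2*(j:ℤ) - 2 from by push_cast; ring,
      show ((2*m+2:ℕ):ℤ) - 2*((j+1:ℕ):ℤ) = 2*(m:ℤ) - 2*(j:ℤ) from by push_cast; ring,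
      show ((2*m:ℕ):ℤ) - 2*((j:ℕ):ℤ) = 2*(m:ℤ) - 2*(j:ℤ) from by push_cast; ring]
  -- invf chains
  have e1 : invf ((j:ℤ) - κ + 1) = ((j:ℝ) - (κ:ℝ) + 2) * invf ((j:ℤ) - κ + 2) := by
    have h := invf_succ ((j:ℤ) - κ + 1)
    rw [show (j:ℤ) - κ + 1 + 1 = (j:ℤ) - κ + 2 from by ring] at h
    rw [h]; push_cast; ring
  have e2 : invf ((j:ℤ) - κ) = ((j:ℝ) - (κ:ℝ) + 1) * ((j:ℝ) - (κ:ℝ) + 2) * invf ((j:ℤ) - κ + 2) := by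
    have h := invf_succ₂ ((j:ℤ) - κ)
    rw [h]; push_cast; ring
  have e3 : invf (κ - 1) = (κ:ℝ) * invf κ := by
    have h := invf_succ (κ - 1)
    rw [show κ - 1 + 1 = κ from by ring] at h
    rw [h]; push_cast; ring
  have e4 : invf (κ - 2) = ((κ:ℝ) - 1) * (κ:ℝ) * invf κ := by
    have h := invf_succ₂ (κ - 2)
    rw [show κ - 2 + 2 = κ from by ring] at h
    rw [h]; push_cast; ring
  have e5 : invf (2*(m:ℤ) - 2*(j:ℤ) - 2)
      = (2*(m:ℝ) - 2*(j:ℝ) - 1) * (2*(m:ℝ) - 2*(j:ℝ)) * invf (2*(m:ℤ) - 2*(j:ℤ)) := by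
    have h := invf_succ₂ (2*(m:ℤ) - 2*(j:ℤ) - 2)
    rw [show 2*(m:ℤ) - 2*(j:ℤ) - 2 + 2 = 2*(m:ℤ) - 2*(j:ℤ) from by ring] at h
    rw [h]; push_cast; ring
  rw [e1, e2, e3, e4, e5]
  -- signs
  rw [show (-1:ℝ)^((j:ℤ) - κ + 2) = (-1:ℝ)^((j:ℤ) - κ) from sgn_add_two _,
      show (-1:ℝ)^((j:ℤ) - κ + 1) = -((-1:ℝ)^((j:ℤ) - κ)) from sgn_add_one _]
  have hc : ((2*m - j : ℕ) : ℝ) = 2*(m:ℝ) - (j:ℝ) := by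
    push_cast [Nat.cast_sub hj]; ring
  push_cast [hc]
  linear_combination scalar_core (m:ℝ) (j:ℝ) (κ:ℝ) ((2*m - j).factorial : ℝ)
    (invf κ) (invf ((j:ℤ) - κ + 2)) (invf (2*(m:ℤ) - 2*(j:ℤ))) ((-1:ℝ)^((j:ℤ) - κ)) hd1 hd2

lemma dd_vanish (N : ℕ) (κ : ℤ) (j : ℕ) (h : (N:ℤ) < 2*j) : dd N κ j = 0 := by
  unfold dd trinom
  rw [if_neg (by omega)]
  ring

lemma dd_zero (N : ℕ) (κ : ℤ) : dd N κ 0 = if κ = 0 then 1 else 0 := by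
  unfold dd
  by_cases hκ : κ = 0
  · subst hκ
    rw [if_pos rfl]
    unfold trinom
    rw [if_pos (by constructor; omega; constructor; omega; constructor; omega; omega)]
    have h1 : ((0:ℕ):ℤ) - 0 = 0 := by omega
    have h2 : ((N:ℤ) - 2*((0:ℕ):ℤ)) = ((N:ℕ):ℤ) := by omega
    rw [h1, h2]
    simp [Int.toNat_natCast]
    have : (N:ℝ) - 2*((0:ℕ):ℝ) + 1 ≠ 0 := by
      push_cast
      have := Nat.cast_nonneg (α := ℝ) N
      intro h; linarith
    field_simp
  · rw [if_neg hκ]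
    unfold trinom
    rw [if_neg (by omega)]
    ring

lemma dd_one (N : ℕ) (κ : ℤ) (hN : 2 ≤ N) :
    dd N κ 1 = if κ = 0 then -((N:ℝ)+1) else if κ = 1 then (N:ℝ)-1 else 0 := by
  unfold dd
  have hNR : (2:ℝ) ≤ (N:ℝ) := by exact_mod_cast hN
  have hden : (N:ℝ) - 2*((1:ℕ):ℝ) + 1 ≠ 0 := by push_cast; intro h; linarith
  have hden2 : (-1:ℝ) + (N:ℝ) ≠ 0 := by intro h; linarith
  have hden3 : (N:ℝ) - 1 ≠ 0 := by intro h; linarith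
  have hden4 : (N:ℝ) - 2 + 1 ≠ 0 := by intro h; linarith
  by_cases h0 : κ = 0
  · subst h0
    rw [if_pos rfl]
    unfold trinom
    rw [if_pos (by refine ⟨by omega, by omega, by omega, by omega⟩)]
    rw [show ((1:ℕ):ℤ) - 0 = ((1:ℕ):ℤ) from by omega,
        show ((N:ℤ) - 2*((1:ℕ):ℤ)) = ((N-2:ℕ):ℤ) from by omega,
        show N - 1 = (N-2) + 1 from by omega]
    rw [Int.toNat_natCast, Int.toNat_natCast, Nat.factorial_succ]
    simp only [Int.toNat_zero, Nat.factorial_zero, Nat.factorial_one]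
    have hc : ((N-2:ℕ):ℝ) = (N:ℝ) - 2 := by
      push_cast [Nat.cast_sub hN]; ring
    rw [zpow_natCast]
    push_cast [hc]
    field_simp [hden2, hden3, hden4]
    ring
  · by_cases h1 : κ = 1
    · subst h1
      rw [if_neg (by norm_num), if_pos rfl]
      unfold trinom
      rw [if_pos (by refine ⟨by omega, by omega, by omega, by omega⟩)]
      rw [show ((1:ℕ):ℤ) - 1 = ((0:ℕ):ℤ) from by omega,
          show ((N:ℤ) - 2*((1:ℕ):ℤ)) = ((N-2:ℕ):ℤ) from by omega,
          show N - 1 = (N-2) + 1 from by omega]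
      rw [Int.toNat_natCast, Int.toNat_natCast, Nat.factorial_succ]
      simp only [Int.toNat_one, Nat.factorial_zero, Nat.factorial_one]
      have hc : ((N-2:ℕ):ℝ) = (N:ℝ) - 2 := by
        push_cast [Nat.cast_sub hN]; ring
      rw [zpow_natCast]
      push_cast [hc]
      field_simp [hden2, hden3, hden4]
      try ring
    · rw [if_neg h0, if_neg h1]
      unfold trinom
      rw [if_neg (by omega)]
      ring

lemma dd_b0 (m : ℕ) (κ : ℤ) : dd (2*m+4) κ 0 = dd (2*m+2) κ 0 := by
  rw [dd_zero, dd_zero]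

lemma dd_b1 (m : ℕ) (κ : ℤ) :
    dd (2*m+4) κ 1 = dd (2*m+2) κ 1 - 2*dd (2*m+2) κ 0 + 2*dd (2*m+2) (κ-1) 0 := by
  rw [dd_one _ _ (by omega), dd_one _ _ (by omega), dd_zero, dd_zero]
  by_cases h0 : κ = 0
  · subst h0; norm_num; push_cast; ring
  · by_cases h1 : κ = 1
    · subst h1; norm_num; push_cast; ring
    · rw [if_neg h0, if_neg h0, if_neg h1, if_neg h1, if_neg h0, if_neg (by omega)]
      ring

noncomputable def cf (α : ℝ) (N : ℕ) (κ : ℤ) : ℝ :=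
  ∑ m ∈ Finset.Icc (N / 2) N,
    ((N : ℝ) - 2*(κ:ℝ) + 1) / (2 * (m : ℝ) - N + 1) *
      trinom m κ ((N : ℤ) - κ - m) (2 * (m : ℤ) - N) *
      (-1 : ℝ) ^ ((N : ℤ) - κ - m) * (α * (1 - α)) ^ (N - m)

lemma cf_eq_sum_dd (α : ℝ) (c : ℕ) (κ : ℤ) :
    cf α (2*c) κ = ∑ j ∈ Finset.range (c + 1), dd (2*c) κ j * (α * (1 - α)) ^ j := by
  unfold cf
  have himg : Finset.Icc ((2*c) / 2) (2*c)
      = (Finset.range (c+1)).image (fun j => 2*c - j) := by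
    ext x
    simp only [Finset.mem_Icc, Finset.mem_image, Finset.mem_range]
    constructor
    · rintro ⟨h1, h2⟩
      exact ⟨2*c - x, by omega, by omega⟩
    · rintro ⟨j, hj, rfl⟩
      omega
  rw [himg, Finset.sum_image (by intro a ha b hb hab; simp only [Finset.coe_range, Set.mem_Iio, Finset.mem_range] at ha hb hab; omega)]
  apply Finset.sum_congr rfl
  intro j hj
  simp only [Finset.mem_range] at hj
  have hjc : j ≤ 2*c := by omega
  unfold dd
  rw [show 2*c - (2*c - j) = j from by omega]
  rw [show ((2*c:ℕ):ℤ) - κ - ((2*c - j:ℕ):ℤ) = (j:ℤ) - κ from by omega]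
  rw [show 2*(((2*c - j:ℕ)):ℤ) - ((2*c:ℕ):ℤ) = ((2*c:ℕ):ℤ) - 2*(j:ℤ) from by omega]
  rw [show (2*(((2*c - j:ℕ)):ℝ) - ((2*c:ℕ):ℝ) + 1) = ((2*c:ℕ):ℝ) - 2*(j:ℝ) + 1 from by
    rw [Nat.cast_sub hjc]; push_cast; ring]

lemma peel2 (F : ℕ → ℝ) (K M : ℕ) (h : K = M + 2) :
    ∑ j ∈ Finset.range K, F j
      = ∑ j ∈ Finset.range M, F (j+2) + F 1 + F 0 := by
  subst h
  rw [Finset.sum_range_succ', Finset.sum_range_succ']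

lemma peel1 (F : ℕ → ℝ) (K M : ℕ) (h : K = M + 1) :
    ∑ j ∈ Finset.range K, F j
      = ∑ j ∈ Finset.range M, F (j+1) + F 0 := by
  subst h
  rw [Finset.sum_range_succ']

lemma cf_rec (α : ℝ) (m : ℕ) (κ : ℤ) :
    cf α (2*(m+2)) κ
      = cf α (2*(m+1)) κ - 2*(α*(1-α))*cf α (2*(m+1)) κ + 2*(α*(1-α))*cf α (2*(m+1)) (κ-1)
        - (α*(1-α))^2*cf α (2*m) κ + 2*(α*(1-α))^2*cf α (2*m) (κ-1)
        - (α*(1-α))^2*cf α (2*m) (κ-2) := by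
  set t := α*(1-α) with ht
  have hext : cf α (2*(m+1)) κ = ∑ j ∈ Finset.range (m+2+1), dd (2*(m+1)) κ j * t^j := by
    rw [cf_eq_sum_dd α (m+1) κ]
    apply Finset.sum_subset (Finset.range_subset_range.2 (by omega))
    intro x hx hnx
    simp only [Finset.mem_range] at hx hnx
    rw [dd_vanish _ _ _ (by push_cast; omega), zero_mul]
  rw [cf_eq_sum_dd α (m+2) κ, cf_eq_sum_dd α (m+1) (κ-1),
      cf_eq_sum_dd α m κ, cf_eq_sum_dd α m (κ-1), cf_eq_sum_dd α m (κ-2)]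
  nth_rewrite 1 [hext]
  rw [cf_eq_sum_dd α (m+1) κ]
  rw [show 2*(m+2) = 2*m+4 from by ring, show 2*(m+1) = 2*m+2 from by ring]
  rw [peel2 (fun j => dd (2*m+4) κ j * t^j) _ (m+1) (by omega)]
  rw [peel2 (fun j => dd (2*m+2) κ j * t^j) _ (m+1) (by omega)]
  rw [peel1 (fun j => dd (2*m+2) κ j * t^j) _ (m+1) (by omega)]
  rw [peel1 (fun j => dd (2*m+2) (κ-1) j * t^j) _ (m+1) (by omega)]
  beta_reduce
  have main : ∑ j ∈ Finset.range (m+1), dd (2*m+4) κ (j+2) * t^(j+2)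
      = ∑ j ∈ Finset.range (m+1),
          (dd (2*m+2) κ (j+2) * t^(j+2) - (2*(dd (2*m+2) κ (j+1) * t^(j+1)))*t
            + (2*(dd (2*m+2) (κ-1) (j+1) * t^(j+1)))*t
            - (dd (2*m) κ j * t^j)*t^2 + (2*(dd (2*m) (κ-1) j * t^j))*t^2
            - (dd (2*m) (κ-2) j * t^j)*t^2) := by
    apply Finset.sum_congr rfl
    intro j hj
    simp only [Finset.mem_range] at hj
    rw [dd_core m j κ (by omega)]
    ring
  rw [main]
  rw [dd_b0 m κ, dd_b1 m κ]
  simp only [Finset.sum_add_distrib, Finset.sum_sub_distrib, ← Finset.sum_mul, ← Finset.mul_sum]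
  ring

noncomputable def uv (α : ℝ) : ℕ → ℤ → ℝ × ℝ
  | 0, k => (if k = 0 then α else 0, if k = 0 then 1 - α else 0)
  | (n+1), k => (α * (uv α n k).1 + α * (uv α n (k-1)).2,
                 (1-α) * (uv α n k).2 + (1-α) * (uv α n (k-1)).1)

noncomputable def pp (α : ℝ) (n : ℕ) (k : ℤ) : ℝ := (uv α n k).1 + (uv α n k).2

lemma uv_neg (α : ℝ) : ∀ (n : ℕ) (k : ℤ), k < 0 → uv α n k = (0, 0) := by
  intro n
  induction n with
  | zero => intro k hk; simp [uv, show ¬(k = 0) from by omega]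
  | succ n ih =>
    intro k hk
    simp only [uv, ih k hk, ih (k-1) (by omega)]
    norm_num

lemma pp_neg (α : ℝ) (n : ℕ) (k : ℤ) (h : k < 0) : pp α n k = 0 := by
  simp [pp, uv_neg α n k h]

lemma pp_rec2 (α : ℝ) (n : ℕ) (k : ℤ) :
    pp α (n+2) k = pp α (n+1) k - (α*(1-α)) * pp α n k + (α*(1-α)) * pp α n (k-2) := by
  simp only [pp, uv]
  rw [show k - 1 - 1 = k - 2 from by ring]
  ring

lemma pp_rec4 (α : ℝ) (n : ℕ) (k : ℤ) :
    pp α (n+4) k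
      = pp α (n+2) k - 2*(α*(1-α))*pp α (n+2) k + 2*(α*(1-α))*pp α (n+2) (k-2)
        - (α*(1-α))^2*pp α n k + 2*(α*(1-α))^2*pp α n (k-2)
        - (α*(1-α))^2*pp α n (k-4) := by
  have A := pp_rec2 α (n+2) k
  rw [show n+2+2 = n+4 from by omega, show n+2+1 = n+3 from by omega] at A
  have B := pp_rec2 α (n+1) k
  rw [show n+1+2 = n+3 from by omega, show n+1+1 = n+2 from by omega] at B
  have C := pp_rec2 α n k
  have D := pp_rec2 α n (k-2)
  rw [show k-2-2 = k-4 from by ring] at D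
  linear_combination A + B + (α*(1-α))*C - (α*(1-α))*D

lemma pp_base0 (α : ℝ) (κ : ℤ) : pp α 0 (2*κ) = cf α 0 κ := by
  unfold cf
  rw [show Finset.Icc (0/2 : ℕ) 0 = {0} from rfl, Finset.sum_singleton]
  by_cases h : κ = 0
  · subst h
    simp only [pp, uv]
    norm_num
    unfold trinom
    rw [if_pos (by refine ⟨le_refl 0, by omega, by omega, by omega⟩)]
    norm_num
  · simp only [pp, uv]
    rw [if_neg (by omega : ¬(2*κ = 0)), if_neg (by omega : ¬(2*κ = 0))]
    unfold trinom
    rw [if_neg (by omega)]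
    norm_num

lemma pp_base1 (α : ℝ) (κ : ℤ) : pp α 2 (2*κ) = cf α 2 κ := by
  have hIcc : Finset.Icc ((2:ℕ)/2) 2 = {1, 2} := rfl
  unfold cf
  rw [hIcc, Finset.sum_insert (by decide), Finset.sum_singleton]
  by_cases h0 : κ = 0
  · subst h0
    simp only [pp, uv]
    norm_num [trinom, show ((2:ℤ).toNat = 2) from rfl]
    ring
  · by_cases h1 : κ = 1
    · subst h1
      simp only [pp, uv]
      norm_num [trinom, show ((2:ℤ).toNat = 2) from rfl]
      ring
    · simp only [pp, uv, if_neg (show ¬(2*κ = 0) from by omega),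
        if_neg (show ¬(2*κ - 1 = 0) from by omega),
        if_neg (show ¬(2*κ - 1 - 1 = 0) from by omega)]
      unfold trinom
      rw [if_neg (by omega), if_neg (by omega)]
      ring

lemma pp_eq_cf (α : ℝ) : ∀ (c : ℕ) (κ : ℤ), pp α (2*c) (2*κ) = cf α (2*c) κ := by
  intro c
  induction c using Nat.strong_induction_on with
  | _ c ih =>
    match c, ih with
    | 0, _ => intro κ; simpa using pp_base0 α κ
    | 1, _ => intro κ; simpa using pp_base1 α κ
    | (m+2), ih =>
      intro κ
      have R := pp_rec4 α (2*m) (2*κ)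
      rw [show 2*m+4 = 2*(m+2) from by ring, show 2*m+2 = 2*(m+1) from by ring,
          show (2*κ - 2 : ℤ) = 2*(κ-1) from by ring,
          show (2*κ - 4 : ℤ) = 2*(κ-2) from by ring] at R
      rw [R, ih (m+1) (by omega) κ, ih (m+1) (by omega) (κ-1),
          ih m (by omega) κ, ih m (by omega) (κ-1), ih m (by omega) (κ-2)]
      rw [cf_rec α m κ]

noncomputable def wgt (α : ℝ) (b : Bool) : ℝ := if b then α else 1 - α

def chg {N : ℕ} (s : Fin (N+1) → Bool) : ℕ :=
  (Finset.univ.filter fun i : Fin N => ¬ (s i.castSucc = s i.succ)).card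

lemma chg_zero (s : Fin 1 → Bool) : chg s = 0 := by
  simp [chg]

lemma bool_ne_not (b : Bool) : ¬ (b = !b) := by cases b <;> simp

lemma bool_eq_not_of_ne {x b : Bool} (h : ¬ x = b) : x = !b := by
  cases x <;> cases b <;> simp_all

lemma chg_cons {N : ℕ} (b : Bool) (s : Fin (N+1) → Bool) :
    chg (Fin.cons b s) = (if b = s 0 then 0 else 1) + chg s := by
  unfold chg
  rw [Finset.card_filter, Finset.card_filter, Fin.sum_univ_succ]
  have e1 : ∀ j : Fin N, (Fin.cons b s : Fin (N+2) → Bool) (j.succ).castSucc = s j.castSucc := by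
    intro j
    rw [← Fin.succ_castSucc]
    simp
  have e2 : ∀ j : Fin N, (Fin.cons b s : Fin (N+2) → Bool) (j.succ).succ = s j.succ :=
    fun j => by simp
  have e3 : (Fin.cons b s : Fin (N+2) → Bool) ((0 : Fin (N+1)).castSucc) = b := by
    rw [Fin.castSucc_zero]; simp
  have e4 : (Fin.cons b s : Fin (N+2) → Bool) ((0 : Fin (N+1)).succ) = s 0 := by
    simp
  simp only [e1, e2, e3, e4]
  by_cases h : b = s 0 <;> simp [h]

lemma prod_wgt_cons (α : ℝ) {N : ℕ} (b : Bool) (s : Fin (N+1) → Bool) :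
    (∏ i : Fin (N+2), wgt α ((Fin.cons b s : Fin (N+2) → Bool) i))
      = wgt α b * ∏ i : Fin (N+1), wgt α (s i) := by
  rw [Fin.prod_univ_succ]
  simp [Fin.cons_zero, Fin.cons_succ]

lemma pattern_sum (α : ℝ) : ∀ (N : ℕ) (k : ℤ),
    (∑ s : Fin (N+1) → Bool,
        (if s 0 = true ∧ (chg s : ℤ) = k then ∏ i, wgt α (s i) else 0)) = (uv α N k).1
    ∧ (∑ s : Fin (N+1) → Bool,
        (if s 0 = false ∧ (chg s : ℤ) = k then ∏ i, wgt α (s i) else 0)) = (uv α N k).2 := by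
  intro N
  induction N with
  | zero =>
    intro k
    constructor
    · rw [← (Equiv.funUnique (Fin 1) Bool).symm.sum_comp, Fintype.sum_bool]
      by_cases hk : k = 0
      · simp [uv, Equiv.funUnique, chg_zero, hk, Fin.prod_univ_one, wgt]
      · simp [uv, Equiv.funUnique, chg_zero, hk, Fin.prod_univ_one, wgt,
          show ¬((0:ℤ) = k) from fun h => hk h.symm]
    · rw [← (Equiv.funUnique (Fin 1) Bool).symm.sum_comp, Fintype.sum_bool]
      by_cases hk : k = 0
      · simp [uv, Equiv.funUnique, chg_zero, hk, Fin.prod_univ_one, wgt]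
      · simp [uv, Equiv.funUnique, chg_zero, hk, Fin.prod_univ_one, wgt,
          show ¬((0:ℤ) = k) from fun h => hk h.symm]
  | succ N ih =>
    intro k
    have key : ∀ (c : Bool) (k : ℤ),
        (∑ s : Fin (N+2) → Bool,
          (if s 0 = c ∧ (chg s : ℤ) = k then ∏ i, wgt α (s i) else 0))
        = wgt α c * ((∑ s : Fin (N+1) → Bool,
              (if s 0 = c ∧ (chg s : ℤ) = k then ∏ i, wgt α (s i) else 0))
            + (∑ s : Fin (N+1) → Bool,
              (if s 0 = (!c) ∧ (chg s : ℤ) = k - 1 then ∏ i, wgt α (s i) else 0))) := by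
      intro c k
      rw [← (Fin.consEquiv (fun _ : Fin (N+2) => Bool)).sum_comp, Fintype.sum_prod_type,
          Fintype.sum_bool]
      have hsplit : ∀ (b : Bool), (∑ s : Fin (N+1) → Bool,
          (if (Fin.consEquiv (fun _ : Fin (N+2) => Bool)) (b, s) 0 = c
              ∧ (chg ((Fin.consEquiv (fun _ : Fin (N+2) => Bool)) (b, s)) : ℤ) = k
            then ∏ i, wgt α (((Fin.consEquiv (fun _ : Fin (N+2) => Bool)) (b, s)) i) else 0))
          = (if b = c then (1:ℝ) else 0) * wgt α c *
              ((∑ s : Fin (N+1) → Bool,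
                (if s 0 = c ∧ (chg s : ℤ) = k then ∏ i, wgt α (s i) else 0))
              + (∑ s : Fin (N+1) → Bool,
                (if s 0 = (!c) ∧ (chg s : ℤ) = k - 1 then ∏ i, wgt α (s i) else 0))) := by
        intro b
        by_cases hbc : b = c
        · subst hbc
          rw [if_pos rfl, one_mul, mul_add, Finset.mul_sum, Finset.mul_sum,
            ← Finset.sum_add_distrib]
          apply Finset.sum_congr rfl
          intro s _
          have hc : (Fin.consEquiv (fun _ : Fin (N+2) => Bool)) (b, s) = Fin.cons b s := rfl
          rw [hc, prod_wgt_cons, chg_cons]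
          rw [show (Fin.cons b s : Fin (N+2) → Bool) 0 = b from by simp]
          by_cases h0 : s 0 = b
          · rw [show (if b = s 0 then (0:ℕ) else 1) = 0 from if_pos h0.symm, Nat.zero_add]
            by_cases hk : (chg s : ℤ) = k
            · rw [if_pos ⟨rfl, hk⟩, if_pos ⟨h0, hk⟩,
                if_neg (fun hcon => bool_ne_not b (h0.symm.trans hcon.1))]
              ring
            · rw [if_neg (fun hcon => hk hcon.2), if_neg (fun hcon => hk hcon.2),
                if_neg (fun hcon => bool_ne_not b (h0.symm.trans hcon.1))]
              ring
          · have hnot : s 0 = !b := bool_eq_not_of_ne h0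
            rw [show (if b = s 0 then (0:ℕ) else 1) = 1 from if_neg (fun h => h0 h.symm)]
            by_cases hk : (chg s : ℤ) = k - 1
            · rw [if_pos ⟨rfl, by push_cast; omega⟩, if_neg (fun hcon => h0 hcon.1),
                if_pos ⟨hnot, hk⟩]
              ring
            · rw [if_neg (fun hcon => hk (by have := hcon.2; push_cast at this; omega)),
                if_neg (fun hcon => h0 hcon.1), if_neg (fun hcon => hk hcon.2)]
              ring
        · have h0 : ∀ s : Fin (N+1) → Bool,
              (Fin.consEquiv (fun _ : Fin (N+2) => Bool)) (b, s) 0 = b := fun s => rfl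
          simp only [h0]
          rw [if_neg hbc, zero_mul, zero_mul]
          apply Finset.sum_eq_zero
          intro x _
          exact if_neg (fun h => hbc h.1)
      rw [hsplit true, hsplit false]
      cases c
      · simp
      · simp
    constructor
    · rw [key true k]
      simp only [Bool.not_true]
      rw [(ih k).1, (ih (k-1)).2]
      show _ = α * (uv α N k).1 + α * (uv α N (k-1)).2
      simp only [wgt, if_pos]
      ring
    · rw [key false k]
      simp only [Bool.not_false]
      rw [(ih k).2, (ih (k-1)).1]
      show _ = (1-α) * (uv α N k).2 + (1-α) * (uv α N (k-1)).1
      simp only [wgt]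
      norm_num
      ring

lemma sign_mul_lemma {x y : ℝ} (hx : x ≠ 0) (hy : y ≠ 0) :
    x*y < 0 ↔ ¬((0 < x) ↔ (0 < y)) := by
  rcases hx.lt_or_gt with h|h <;> rcases hy.lt_or_gt with h'|h'
  · simp [lt_asymm (mul_pos_of_neg_of_neg h h'), h.not_gt, h'.not_gt]
  · simp [mul_neg_of_neg_of_pos h h', h.not_gt, h']
  · simp [mul_neg_of_pos_of_neg h h', h, h'.not_gt]
  · simp [lt_asymm (mul_pos h h'), h, h']


/-- Explicit formula for the probability `p_{k,n}` of exactly `k` sign changes,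
for even `n ≥ 2`, even `k = 2k′` and `α ≠ 1/2`:
`p_{k,n} = Σ_{m=n/2}^{n} ((n−k+1)/(2m−n+1))·M(m; k′, n−k′−m, 2m−n)·(−1)^{n−k′−m}·(α(1−α))^{n−m}`. -/
theorem prob_signChanges_even_explicit
    {Ω : Type*} [MeasurableSpace Ω] (μ : Measure Ω) [IsProbabilityMeasure μ]
    (n : ℕ) (hn : 2 ≤ n) (hneven : Even n)
    (α : ℝ) (hα : α ∈ Set.Icc (0 : ℝ) 1) (hα' : α ≠ 1 / 2)
    (k k' : ℕ) (hkn : k ≤ n) (heven : k = 2 * k')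
    (a : ℕ → Ω → ℝ)
    (hmeas : ∀ i, Measurable (a i))
    (hindep : iIndepFun
      (fun i : Fin (n + 1) => a i) μ)
    (hpos : ∀ i ≤ n, μ {ω | 0 < a i ω} = ENNReal.ofReal α)
    (hneg : ∀ i ≤ n, μ {ω | a i ω < 0} = ENNReal.ofReal (1 - α)) :
    (μ {ω | signChanges a n ω = k}).toReal =
      ∑ m ∈ Finset.Icc (n / 2) n,
        ((n : ℝ) - k + 1) / (2 * (m : ℝ) - n + 1) *
          trinom m (k' : ℤ) ((n : ℤ) - k' - m) (2 * (m : ℤ) - n) *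
          (-1 : ℝ) ^ ((n : ℤ) - k' - m) * (α * (1 - α)) ^ (n - m) := by
  classical
  obtain ⟨hα0, hα1⟩ := hα
  -- sign-event sets
  set B : Fin (n+1) → Bool → Set Ω :=
    fun i b => if b then {ω | 0 < a i ω} else {ω | a i ω < 0} with hB
  have hBmeas : ∀ (i : Fin (n+1)) (b : Bool), MeasurableSet (B i b) := by
    intro i b
    cases b
    · exact measurableSet_lt (hmeas i) measurable_const
    · exact measurableSet_lt measurable_const (hmeas i)
  have hBcomap : ∀ (i : Fin (n+1)) (b : Bool),
      MeasurableSet[MeasurableSpace.comap (a i) inferInstance] (B i b) := by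
    intro i b
    cases b
    · exact ⟨Set.Iio 0, measurableSet_Iio, rfl⟩
    · exact ⟨Set.Ioi 0, measurableSet_Ioi, rfl⟩
  have hμB : ∀ (i : Fin (n+1)) (b : Bool), μ (B i b) = ENNReal.ofReal (wgt α b) := by
    intro i b
    cases b
    · exact hneg i (Fin.is_le i)
    · exact hpos i (Fin.is_le i)
  set A : (Fin (n+1) → Bool) → Set Ω := fun s => ⋂ i, B i (s i) with hA
  have hAmeas : ∀ s, MeasurableSet (A s) := fun s => MeasurableSet.iInter fun i => hBmeas i (s i)
  have hμA : ∀ s, μ (A s) = ENNReal.ofReal (∏ i, wgt α (s i)) := by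
    intro s
    have h1 : μ (A s) = ∏ i, μ (B i (s i)) :=
      hindep.meas_iInter fun i => hBcomap i (s i)
    have h2 : ∀ i : Fin (n+1), i ∈ Finset.univ → 0 ≤ wgt α (s i) := by
      intro i _
      cases hsi : s i <;> simp [wgt] <;> linarith
    have h3 : ∏ i : Fin (n+1), μ (B i (s i)) = ∏ i : Fin (n+1), ENNReal.ofReal (wgt α (s i)) :=
      Finset.prod_congr rfl fun i _ => hμB i (s i)
    rw [h1, h3, ← ENNReal.ofReal_prod_of_nonneg h2]
  -- null set of zero values
  have hzero : ∀ i : Fin (n+1), μ {ω | a i ω = 0} = 0 := by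
    intro i
    have hle : (i : ℕ) ≤ n := Fin.is_le i
    have hu : {ω | 0 < a (i:ℕ) ω} ∪ {ω | a (i:ℕ) ω < 0} ∪ {ω | a (i:ℕ) ω = 0} = Set.univ := by
      ext ω
      simp only [Set.mem_union, Set.mem_setOf_eq, Set.mem_univ, iff_true]
      rcases lt_trichotomy (a (i:ℕ) ω) 0 with h|h|h
      · exact Or.inl (Or.inr h)
      · exact Or.inr h
      · exact Or.inl (Or.inl h)
    have hd1 : Disjoint {ω | 0 < a (i:ℕ) ω} {ω | a (i:ℕ) ω < 0} := by
      rw [Set.disjoint_left]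
      intro ω h1 h2
      simp only [Set.mem_setOf_eq] at h1 h2
      exact absurd h2 (asymm h1)
    have hd2 : Disjoint ({ω | 0 < a (i:ℕ) ω} ∪ {ω | a (i:ℕ) ω < 0}) {ω | a (i:ℕ) ω = 0} := by
      rw [Set.disjoint_left]
      rintro ω (h1|h1) h2 <;> simp only [Set.mem_setOf_eq] at * <;> simp [h2] at h1
    have hm0 : MeasurableSet {ω | a (i:ℕ) ω = 0} :=
      (hmeas (i:ℕ)) (measurableSet_singleton 0)
    have hsum : μ ({ω | 0 < a (i:ℕ) ω} ∪ {ω | a (i:ℕ) ω < 0})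
        + μ {ω | a (i:ℕ) ω = 0} = 1 := by
      rw [← measure_union hd2 hm0, hu, measure_univ]
    have hsum2 : μ ({ω | 0 < a (i:ℕ) ω} ∪ {ω | a (i:ℕ) ω < 0}) = 1 := by
      rw [measure_union hd1 (measurableSet_lt (hmeas (i:ℕ)) measurable_const),
        hpos i hle, hneg i hle, ← ENNReal.ofReal_add hα0 (by linarith)]
      norm_num
    rw [hsum2] at hsum
    exact (ENNReal.add_right_inj ENNReal.one_ne_top).1 (by rw [add_zero]; exact hsum)
  have hZ : μ (⋃ i : Fin (n+1), {ω | a (i:ℕ) ω = 0}) = 0 :=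
    measure_iUnion_null hzero
  set pat : Ω → (Fin (n+1) → Bool) := fun ω i => decide (0 < a (i:ℕ) ω) with hpat
  have hmem_pat : ∀ ω, (∀ i : Fin (n+1), a (i:ℕ) ω ≠ 0) → ω ∈ A (pat ω) := by
    intro ω h
    refine Set.mem_iInter.2 fun i => ?_
    by_cases hp : 0 < a (i:ℕ) ω
    · have hq : pat ω i = true := by simp [hpat, hp]
      rw [hq]
      simpa [hB] using hp
    · have hlt : a (i:ℕ) ω < 0 := ((h i).lt_or_gt).resolve_right hp
      have hq : pat ω i = false := by simp [hpat, hp]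
      rw [hq]
      simpa [hB] using hlt
  have hpat_unique : ∀ ω (s : Fin (n+1) → Bool), ω ∈ A s
      → s = pat ω ∧ (∀ i : Fin (n+1), a (i:ℕ) ω ≠ 0) := by
    intro ω s hω
    have hmem : ∀ i, ω ∈ B i (s i) := Set.mem_iInter.1 hω
    have hsigns : ∀ i : Fin (n+1), (s i = true → 0 < a (i:ℕ) ω)
        ∧ (s i = false → a (i:ℕ) ω < 0) := by
      intro i
      have hm := hmem i
      constructor
      · intro hsi; rw [hsi] at hm; simpa [hB] using hm
      · intro hsi; rw [hsi] at hm; simpa [hB] using hm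
    constructor
    · funext i
      cases hsi : s i
      · have := (hsigns i).2 hsi
        simp [hpat, asymm this]
      · have := (hsigns i).1 hsi
        simp [hpat, this]
    · intro i
      cases hsi : s i
      · exact ne_of_lt ((hsigns i).2 hsi)
      · exact ne_of_gt ((hsigns i).1 hsi)
  have sc_eq : ∀ ω, (∀ i : Fin (n+1), a (i:ℕ) ω ≠ 0) → signChanges a n ω = chg (pat ω) := by
    intro ω h
    unfold signChanges chg
    rw [Finset.card_filter, Finset.card_filter,
      ← Fin.sum_univ_eq_sum_range (fun i => if a i ω * a (i+1) ω < 0 then 1 else 0) n]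
    apply Finset.sum_congr rfl
    intro i _
    have hx : a ((i : ℕ)) ω ≠ 0 := by
      have := h i.castSucc
      rwa [Fin.coe_castSucc] at this
    have hy : a ((i : ℕ) + 1) ω ≠ 0 := by
      have := h i.succ
      rwa [Fin.val_succ] at this
    apply if_congr _ rfl rfl
    rw [sign_mul_lemma hx hy]
    simp [hpat, Fin.coe_castSucc, Fin.val_succ, decide_eq_decide]
  set F : Finset (Fin (n+1) → Bool) :=
    Finset.univ.filter (fun s : Fin (n+1) → Bool => chg s = k) with hF
  have hdisj : (F : Set (Fin (n+1) → Bool)).PairwiseDisjoint A := by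
    intro s _ t _ hst
    obtain ⟨i, hi⟩ := Function.ne_iff.1 hst
    refine Set.disjoint_left.2 fun {ω} hωs hωt => ?_
    have h1 := Set.mem_iInter.1 hωs i
    have h2 := Set.mem_iInter.1 hωt i
    cases hsi : s i <;> cases hti : t i
    · exact hi (hsi.trans hti.symm)
    · rw [hsi] at h1; rw [hti] at h2
      simp only [hB] at h1 h2
      norm_num at h1 h2
      exact absurd h1 (asymm h2)
    · rw [hsi] at h1; rw [hti] at h2
      simp only [hB] at h1 h2
      norm_num at h1 h2
      exact absurd h2 (asymm h1)
    · exact hi (hsi.trans hti.symm)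
  have hsetEq : {ω | signChanges a n ω = k} \ (⋃ i : Fin (n+1), {ω | a (i:ℕ) ω = 0})
      = (⋃ s ∈ F, A s) \ (⋃ i : Fin (n+1), {ω | a (i:ℕ) ω = 0}) := by
    ext ω
    simp only [Set.mem_diff, Set.mem_setOf_eq, Set.mem_iUnion, not_exists, exists_prop,
      hF, Finset.mem_filter, Finset.mem_univ, true_and]
    constructor
    · rintro ⟨hsc, hnz⟩
      have h0 : ∀ i : Fin (n+1), a (i:ℕ) ω ≠ 0 := fun i => by
        intro hcon
        exact (hnz i) hcon
      exact ⟨⟨pat ω, (sc_eq ω h0) ▸ hsc, hmem_pat ω h0⟩, hnz⟩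
    · rintro ⟨⟨s, hs, hωs⟩, hnz⟩
      have h0 : ∀ i : Fin (n+1), a (i:ℕ) ω ≠ 0 := (hpat_unique ω s hωs).2
      refine ⟨?_, hnz⟩
      rw [sc_eq ω h0, ← (hpat_unique ω s hωs).1]
      exact hs
  have hμeq : μ {ω | signChanges a n ω = k} = ∑ s ∈ F, μ (A s) := by
    calc μ {ω | signChanges a n ω = k}
        = μ ({ω | signChanges a n ω = k} \ (⋃ i : Fin (n+1), {ω | a (i:ℕ) ω = 0})) :=
          (measure_diff_null hZ).symm
      _ = μ ((⋃ s ∈ F, A s) \ (⋃ i : Fin (n+1), {ω | a (i:ℕ) ω = 0})) := by rw [hsetEq]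
      _ = μ (⋃ s ∈ F, A s) := measure_diff_null hZ
      _ = ∑ s ∈ F, μ (A s) := measure_biUnion_finset hdisj (fun s _ => hAmeas s)
  have hprodnn : ∀ s : Fin (n+1) → Bool, (0:ℝ) ≤ ∏ i, wgt α (s i) := by
    intro s
    apply Finset.prod_nonneg
    intro i _
    cases hsi : s i <;> simp [wgt] <;> linarith
  have htoReal : (μ {ω | signChanges a n ω = k}).toReal = ∑ s ∈ F, ∏ i, wgt α (s i) := by
    have h1 : ∑ s ∈ F, μ (A s) = ∑ s ∈ F, ENNReal.ofReal (∏ i, wgt α (s i)) :=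
      Finset.sum_congr rfl fun s _ => hμA s
    rw [hμeq, h1, ← ENNReal.ofReal_sum_of_nonneg (fun s _ => hprodnn s),
      ENNReal.toReal_ofReal (Finset.sum_nonneg fun s _ => hprodnn s)]
  have hsplit : ∑ s ∈ F, ∏ i, wgt α (s i) = pp α n (k:ℤ) := by
    rw [hF, Finset.sum_filter]
    have hps := pattern_sum α n (k:ℤ)
    rw [pp, ← hps.1, ← hps.2, ← Finset.sum_add_distrib]
    apply Finset.sum_congr rfl
    intro s _
    by_cases hck : chg s = k
    · have hck' : (chg s : ℤ) = (k:ℤ) := by exact_mod_cast hck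
      cases hs0 : s 0
      · rw [if_pos hck, if_neg (by simp), if_pos ⟨rfl, hck'⟩, zero_add]
      · rw [if_pos hck, if_pos ⟨rfl, hck'⟩, if_neg (by simp), add_zero]
    · have hck' : ¬ ((chg s : ℤ) = (k:ℤ)) := by exact_mod_cast hck
      rw [if_neg hck, if_neg (fun h => hck' h.2), if_neg (fun h => hck' h.2), add_zero]
  obtain ⟨c, hc⟩ := hneven
  have h2c : n = 2*c := by omega
  have hfinal : pp α n (k:ℤ) = cf α n (k':ℤ) := by
    have e1 : ((k:ℕ):ℤ) = 2*((k':ℕ):ℤ) := by rw [heven]; push_cast; ring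
    rw [h2c, e1]
    exact pp_eq_cf α c (k':ℤ)
  rw [htoReal, hsplit, hfinal]
  unfold cf
  apply Finset.sum_congr rfl
  intro m _
  rw [heven]
  push_cast
  ring
end

section
/- Let d ≥ 2, α ∈ [0,1], and let β_0, …, β_{d−1} be independent real-valued random variables with P(β_k > 0) = α and P(β_k < 0) = 1 − α for every k. With p_m the probability that P(y) = Σ_{k=0}^{d−1} β_k·C(d−1,k)·y^k has exactly m roots in (0, ∞) counted with multiplicity, one has: (i) p_0 ≥ α^d + (1−α)^d ≥ 1/2^{d−1}; and (ii) if α ≠ 1/2, then p_1 ≥ 2α(1−α)·((1−α)^{d−1} − α^{d−1})/(1 − 2α). -/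
open MeasureTheory ProbabilityTheory Polynomial

lemma eval_P {d : ℕ} (a : Fin d → ℝ) (y : ℝ) :
    (∑ k : Fin d, C (a k) * X ^ (k : ℕ)).eval y = ∑ k : Fin d, a k * y ^ (k : ℕ) := by
  simp [eval_finset_sum]

lemma count_eq_one {d : ℕ} (hd : 2 ≤ d) (a : Fin d → ℝ) (j : ℕ) (hj1 : 1 ≤ j) (hjd : j < d)
    (hapos : ∀ k : Fin d, (k : ℕ) < j → 0 < a k) (haneg : ∀ k : Fin d, j ≤ (k : ℕ) → a k < 0) :
    Multiset.card (Multiset.filter (fun y => 0 < y)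
      ((∑ k : Fin d, C (a k) * X ^ (k : ℕ)).roots)) = 1 := by
  set p : Polynomial ℝ := ∑ k : Fin d, C (a k) * X ^ (k : ℕ) with hp
  have ha0 : 0 < a ⟨0, by omega⟩ := hapos _ (by simp; omega)
  have hal : a ⟨d - 1, by omega⟩ < 0 := haneg _ (by simp; omega)
  -- coefficients
  have hcoeff : ∀ n (hn : n < d), p.coeff n = a ⟨n, hn⟩ := by
    intro n hn
    rw [hp, finset_sum_coeff]
    rw [Finset.sum_eq_single (⟨n, hn⟩ : Fin d)]
    · simp
    · intro k _ hk
      have : (k : ℕ) ≠ n := fun h => hk (by ext; simp [h])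
      simp only [coeff_C_mul, coeff_X_pow]
      rw [if_neg (Ne.symm this), mul_zero]
    · simp
  have hcoeff0 : p.coeff 0 = a ⟨0, by omega⟩ := hcoeff 0 (by omega)
  have pne : p ≠ 0 := fun h => by
    rw [h, coeff_zero] at hcoeff0; exact absurd hcoeff0.symm ha0.ne'
  -- degree
  have hdegle : p.natDegree ≤ d - 1 := by
    apply natDegree_sum_le_of_forall_le
    intro k _
    exact (natDegree_C_mul_X_pow_le _ _).trans (by omega)
  have hdegge : d - 1 ≤ p.natDegree := by
    apply le_natDegree_of_ne_zero
    rw [hcoeff (d-1) (by omega)]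
    exact ne_of_lt hal
  have hnatdeg : p.natDegree = d - 1 := le_antisymm hdegle hdegge
  have hleading : p.leadingCoeff < 0 := by
    rw [leadingCoeff, hnatdeg, hcoeff (d-1) (by omega)]; exact hal
  have hdegpos : 0 < p.degree := by
    rw [degree_eq_natDegree pne, hnatdeg]
    exact_mod_cast Nat.sub_pos_of_lt (by omega)
  -- existence via IVT
  have heval0 : p.eval 0 = a ⟨0, by omega⟩ := by
    rw [← coeff_zero_eq_eval_zero, hcoeff0]
  obtain ⟨y1, hy1pos, hy1neg⟩ : ∃ y1, 0 < y1 ∧ p.eval y1 < 0 := by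
    have ht := p.tendsto_atBot_of_leadingCoeff_nonpos hdegpos hleading.le
    have := (ht.eventually (Filter.eventually_lt_atBot (0:ℝ))).and (Filter.eventually_gt_atTop (0:ℝ))
    obtain ⟨y1, h1, h2⟩ := this.exists
    exact ⟨y1, h2, h1⟩
  obtain ⟨y0, hy0mem, hy0root⟩ : ∃ y0 ∈ Set.Ioo (0:ℝ) y1, p.eval y0 = 0 := by
    have hc : ContinuousOn (fun y => p.eval y) (Set.Icc 0 y1) :=
      (Polynomial.continuous p).continuousOn
    have := intermediate_value_Ioo' hy1pos.le hc
    have h0mem : (0:ℝ) ∈ Set.Ioo (p.eval y1) (p.eval 0) := by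
      rw [heval0]; exact ⟨hy1neg, ha0⟩
    obtain ⟨y0, hy0, he⟩ := this h0mem
    exact ⟨y0, hy0, he⟩
  have hy0pos : 0 < y0 := hy0mem.1
  -- uniqueness
  have key : ∀ u v : ℝ, 0 < u → u < v → p.eval u = 0 → p.eval v = 0 → False := by
    intro u v hu huv h1 h2
    have hv : 0 < v := hu.trans huv
    have h3 : (0:ℝ) < ∑ k : Fin d, a k * (u ^ (k:ℕ) * v ^ j - v ^ (k:ℕ) * u ^ j) := by
      apply Finset.sum_pos'
      · intro k _
        rcases lt_trichotomy (k:ℕ) j with h | h | h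
        · have ev : v ^ j = v ^ (k:ℕ) * v ^ (j - (k:ℕ)) := by rw [← pow_add]; congr 1; omega
          have eu : u ^ j = u ^ (k:ℕ) * u ^ (j - (k:ℕ)) := by rw [← pow_add]; congr 1; omega
          rw [ev, eu]
          have hlt : u ^ (j - (k:ℕ)) < v ^ (j - (k:ℕ)) :=
            pow_lt_pow_left₀ huv hu.le (by omega)
          have hh := mul_pos (mul_pos (hapos k h)
            (mul_pos (pow_pos hu (k:ℕ)) (pow_pos hv (k:ℕ)))) (sub_pos.mpr hlt)
          nlinarith [hh]
        · rw [h, show u ^ j * v ^ j - v ^ j * u ^ j = 0 by ring, mul_zero]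
        · have ev : v ^ (k:ℕ) = v ^ j * v ^ ((k:ℕ) - j) := by rw [← pow_add]; congr 1; omega
          have eu : u ^ (k:ℕ) = u ^ j * u ^ ((k:ℕ) - j) := by rw [← pow_add]; congr 1; omega
          rw [ev, eu]
          have hlt : u ^ ((k:ℕ) - j) < v ^ ((k:ℕ) - j) :=
            pow_lt_pow_left₀ huv hu.le (by omega)
          have hh := mul_pos (mul_pos (neg_pos.mpr (haneg k h.le))
            (mul_pos (pow_pos hu j) (pow_pos hv j))) (sub_pos.mpr hlt)
          nlinarith [hh]
      · refine ⟨⟨0, by omega⟩, Finset.mem_univ _, ?_⟩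
        have hlt : u ^ j < v ^ j := pow_lt_pow_left₀ huv hu.le (by omega)
        simpa using mul_pos ha0 (by simpa using sub_pos.mpr hlt)
    have h4 : ∑ k : Fin d, a k * (u ^ (k:ℕ) * v ^ j - v ^ (k:ℕ) * u ^ j)
        = v ^ j * (∑ k : Fin d, a k * u ^ (k:ℕ)) - u ^ j * (∑ k : Fin d, a k * v ^ (k:ℕ)) := by
      rw [Finset.mul_sum, Finset.mul_sum, ← Finset.sum_sub_distrib]
      exact Finset.sum_congr rfl fun k _ => by ring
    rw [eval_P] at h1 h2
    rw [h4, h1, h2] at h3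
    simp at h3
  -- derivative
  have hderiv : (derivative p).eval y0
      = ∑ k : Fin d, a k * ((k:ℕ):ℝ) * y0 ^ ((k:ℕ) - 1) := by
    rw [hp, derivative_sum, eval_finset_sum]
    apply Finset.sum_congr rfl
    intro k _
    rw [derivative_C_mul_X_pow]
    simp
  have hsum0 : ∑ k : Fin d, a k * y0 ^ (k:ℕ) = 0 := by
    rw [← eval_P a y0, ← hp]; exact hy0root
  have hkey2 : y0 * (derivative p).eval y0 < 0 := by
    have eA : y0 * (derivative p).eval y0 = ∑ k : Fin d, a k * ((k:ℕ):ℝ) * y0 ^ (k:ℕ) := by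
      rw [hderiv, Finset.mul_sum]
      apply Finset.sum_congr rfl
      intro k _
      rcases Nat.eq_zero_or_pos (k:ℕ) with h | h
      · simp [h]
      · have hpow : y0 ^ ((k:ℕ) - 1) * y0 = y0 ^ (k:ℕ) := by
          rw [← pow_succ]; congr 1; omega
        rw [← hpow]; ring
    have eB : ∑ k : Fin d, a k * (((k:ℕ):ℝ) - (j:ℝ)) * y0 ^ (k:ℕ)
        = (∑ k : Fin d, a k * ((k:ℕ):ℝ) * y0 ^ (k:ℕ))
          - (j:ℝ) * ∑ k : Fin d, a k * y0 ^ (k:ℕ) := by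
      rw [Finset.mul_sum, ← Finset.sum_sub_distrib]
      exact Finset.sum_congr rfl fun k _ => by ring
    have e1 : y0 * (derivative p).eval y0
        = ∑ k : Fin d, a k * (((k:ℕ):ℝ) - (j:ℝ)) * y0 ^ (k:ℕ) := by
      rw [eA, eB, hsum0, mul_zero, sub_zero]
    rw [e1]
    have hps : (0:ℝ) < ∑ k : Fin d, -(a k * (((k:ℕ):ℝ) - (j:ℝ)) * y0 ^ (k:ℕ)) := by
      apply Finset.sum_pos'
      · intro k _
        rcases lt_trichotomy (k:ℕ) j with h | h | h
        · have h1 : ((k:ℕ):ℝ) < (j:ℝ) := by exact_mod_cast h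
          have hh := mul_pos (mul_pos (hapos k h) (sub_pos.mpr h1)) (pow_pos hy0pos (k:ℕ))
          nlinarith [hh]
        · simp [h]
        · have h1 : (j:ℝ) < ((k:ℕ):ℝ) := by exact_mod_cast h
          have hh := mul_pos (mul_pos (neg_pos.mpr (haneg k h.le)) (sub_pos.mpr h1))
            (pow_pos hy0pos (k:ℕ))
          nlinarith [hh]
      · refine ⟨⟨0, by omega⟩, Finset.mem_univ _, ?_⟩
        have hj0 : (0:ℝ) < (j:ℝ) := by exact_mod_cast hj1
        norm_num
        nlinarith [ha0, hj0]
    rw [Finset.sum_neg_distrib] at hps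
    linarith
  have uniq : ∀ z, 0 < z → p.IsRoot z → z = y0 := by
    intro z hz hzr
    rcases lt_trichotomy z y0 with h | h | h
    · exact (key z y0 hz h hzr hy0root).elim
    · exact h
    · exact (key y0 z hy0pos h hy0root hzr).elim
  have hmult : p.rootMultiplicity y0 = 1 := by
    have hge : 0 < p.rootMultiplicity y0 := (rootMultiplicity_pos pne).mpr hy0root
    have hnot : ¬ 1 < p.rootMultiplicity y0 := by
      rw [one_lt_rootMultiplicity_iff_isRoot pne]
      rintro ⟨-, hder⟩
      rw [IsRoot.def] at hder
      rw [hder, mul_zero] at hkey2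
      exact lt_irrefl 0 hkey2
    omega
  have hfeq : Multiset.filter (fun y => 0 < y) p.roots
      = Multiset.filter (fun y => y0 = y) p.roots := by
    apply Multiset.filter_congr
    intro y hy
    constructor
    · intro h0
      exact (uniq y h0 (mem_roots'.mp hy).2).symm
    · rintro rfl
      exact hy0pos
  rw [hfeq, ← Multiset.countP_eq_card_filter, ← Multiset.count, count_roots, hmult]

lemma count_eq_one' {d : ℕ} (hd : 2 ≤ d) (a : Fin d → ℝ) (j : ℕ) (hj1 : 1 ≤ j) (hjd : j < d)
    (haneg : ∀ k : Fin d, (k : ℕ) < j → a k < 0) (hapos : ∀ k : Fin d, j ≤ (k : ℕ) → 0 < a k) :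
    Multiset.card (Multiset.filter (fun y => 0 < y)
      ((∑ k : Fin d, C (a k) * X ^ (k : ℕ)).roots)) = 1 := by
  have h := count_eq_one hd (fun k => -a k) j hj1 hjd
    (fun k hk => by simpa using haneg k hk) (fun k hk => by simpa using hapos k hk)
  have hneg : (∑ k : Fin d, C ((fun k => -a k) k) * X ^ (k : ℕ))
      = C (-1) * ∑ k : Fin d, C (a k) * X ^ (k : ℕ) := by
    rw [Finset.mul_sum]
    apply Finset.sum_congr rfl
    intro k _
    rw [← mul_assoc, ← C_mul]
    norm_num
  rw [hneg, roots_C_mul _ (by norm_num : (-1:ℝ) ≠ 0)] at h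
  exact h

lemma count_eq_zero_of_pos {d : ℕ} (hd : 0 < d) (a : Fin d → ℝ) (h : ∀ k, 0 < a k) :
    Multiset.card (Multiset.filter (fun y => 0 < y)
      ((∑ k : Fin d, C (a k) * X ^ (k : ℕ)).roots)) = 0 := by
  rw [Multiset.card_eq_zero, Multiset.filter_eq_nil]
  intro y hy hy0
  have h2 := (mem_roots'.mp hy).2
  rw [IsRoot, eval_P] at h2
  have h3 : 0 < ∑ k : Fin d, a k * y ^ (k : ℕ) :=
    Finset.sum_pos (fun k _ => mul_pos (h k) (pow_pos hy0 _)) ⟨⟨0, hd⟩, Finset.mem_univ _⟩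
  linarith

lemma count_eq_zero_of_neg {d : ℕ} (hd : 0 < d) (a : Fin d → ℝ) (h : ∀ k, a k < 0) :
    Multiset.card (Multiset.filter (fun y => 0 < y)
      ((∑ k : Fin d, C (a k) * X ^ (k : ℕ)).roots)) = 0 := by
  rw [Multiset.card_eq_zero, Multiset.filter_eq_nil]
  intro y hy hy0
  have h2 := (mem_roots'.mp hy).2
  rw [IsRoot, eval_P] at h2
  have h3 : 0 < ∑ k : Fin d, -(a k * y ^ (k : ℕ)) :=
    Finset.sum_pos (fun k _ => by nlinarith [h k, pow_pos hy0 (k : ℕ)]) ⟨⟨0, hd⟩, Finset.mem_univ _⟩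
  rw [Finset.sum_neg_distrib] at h3
  linarith

lemma prod_pattern (d : ℕ) (j : ℕ) (hj : j ≤ d) (x y : ℝ) (hx : 0 ≤ x) (hy : 0 ≤ y) :
    (∏ k : Fin d, ENNReal.ofReal (if (k:ℕ) < j then x else y))
      = ENNReal.ofReal (x ^ j * y ^ (d - j)) := by
  rw [Fin.prod_univ_eq_prod_range (fun i => ENNReal.ofReal (if i < j then x else y)) d]
  rw [Finset.range_eq_Ico, ← Finset.prod_Ico_consecutive _ (Nat.zero_le j) hj]
  calc (∏ i ∈ Finset.Ico 0 j, ENNReal.ofReal (if i < j then x else y)) *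
        ∏ i ∈ Finset.Ico j d, ENNReal.ofReal (if i < j then x else y)
      = (∏ _i ∈ Finset.Ico 0 j, ENNReal.ofReal x) *
        ∏ _i ∈ Finset.Ico j d, ENNReal.ofReal y := by
        congr 1
        · exact Finset.prod_congr rfl fun i hi => by rw [if_pos (Finset.mem_Ico.mp hi).2]
        · exact Finset.prod_congr rfl fun i hi => by
            rw [if_neg (by have := (Finset.mem_Ico.mp hi).1; omega)]
    _ = ENNReal.ofReal x ^ j * ENNReal.ofReal y ^ (d - j) := by
        rw [Finset.prod_const, Finset.prod_const, Nat.card_Ico, Nat.card_Ico, Nat.sub_zero]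
    _ = ENNReal.ofReal (x ^ j * y ^ (d - j)) := by
        rw [← ENNReal.ofReal_pow hx, ← ENNReal.ofReal_pow hy,
          ← ENNReal.ofReal_mul (pow_nonneg hx _)]

lemma sum_pattern (d : ℕ) (hd : 2 ≤ d) (α : ℝ) (hαhalf : α ≠ 1/2) :
    ∑ j ∈ Finset.Ico 1 d, (α^j * (1-α)^(d-j) + (1-α)^j * α^(d-j))
      = 2*α*(1-α)*((1-α)^(d-1) - α^(d-1))/(1-2*α) := by
  have h2α : (1:ℝ) - 2*α ≠ 0 := fun h => hαhalf (by linarith)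
  rw [eq_div_iff h2α]
  rw [Finset.sum_Ico_eq_sum_range]
  have hd1 : ∀ i ∈ Finset.range (d-1),
      (α^(1+i) * (1-α)^(d-(1+i)) + (1-α)^(1+i) * α^(d-(1+i)))
        = α*(1-α) * (α^i * (1-α)^(d-1-1-i) + (1-α)^i * α^(d-1-1-i)) := by
    intro i hi
    have hi' := Finset.mem_range.mp hi
    have e1 : d - (1+i) = (d-1-1-i) + 1 := by omega
    rw [e1, pow_succ, pow_succ, pow_add, pow_add]
    ring
  rw [Finset.sum_congr rfl hd1, ← Finset.mul_sum, Finset.sum_add_distrib]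
  have g1 := geom_sum₂_mul α (1-α) (d-1)
  have g2 := geom_sum₂_mul (1-α) α (d-1)
  linear_combination (α*(1-α))*g2 - (α*(1-α))*g1
/-- The number of roots in `(0, ∞)`, counted with multiplicity, of the polynomial
`P(y) = Σ_{k=0}^{d−1} β_k · C(d−1, k) · y^k`. Its positive roots are the internal
equilibria of a `d`-player two-strategy random evolutionary game. -/
noncomputable def numInternalEquilibria (d : ℕ) (β : Fin d → ℝ) : ℕ :=
  Multiset.card (Multiset.filter (fun y => 0 < y)
    (Polynomial.roots (∑ k : Fin d,
      Polynomial.C (β k * ((d - 1).choose (k : ℕ) : ℝ)) * Polynomial.X ^ (k : ℕ))))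

lemma numIE_def (d : ℕ) (b : Fin d → ℝ) : numInternalEquilibria d b
    = Multiset.card (Multiset.filter (fun y => 0 < y)
      ((∑ k : Fin d, C (b k * ((d - 1).choose (k:ℕ) : ℝ)) * X ^ (k : ℕ)).roots)) := rfl

/-- For a `d`-player two-strategy random evolutionary game with
`P(β_k > 0) = α` and `P(β_k < 0) = 1 − α`:
(i) `p_0 ≥ α^d + (1−α)^d ≥ 1/2^{d−1}`; and
(ii) if `α ≠ 1/2`, then `p_1 ≥ 2α(1−α)·((1−α)^{d−1} − α^{d−1})/(1 − 2α)`. -/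
theorem prob_internalEquilibria_lower_bounds_general
    {Ω : Type*} [MeasurableSpace Ω] (μ : Measure Ω) [IsProbabilityMeasure μ]
    (d : ℕ) (hd : 2 ≤ d) (α : ℝ) (hα : α ∈ Set.Icc (0 : ℝ) 1)
    (β : Fin d → Ω → ℝ)
    (hmeas : ∀ k, Measurable (β k))
    (hindep : iIndepFun β μ)
    (hpos : ∀ k, μ {ω | 0 < β k ω} = ENNReal.ofReal α)
    (hneg : ∀ k, μ {ω | β k ω < 0} = ENNReal.ofReal (1 - α)) :
    (α ^ d + (1 - α) ^ d ≤
        (μ {ω | numInternalEquilibria d (fun k => β k ω) = 0}).toReal ∧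
      (1 : ℝ) / 2 ^ (d - 1) ≤ α ^ d + (1 - α) ^ d) ∧
    (α ≠ 1 / 2 →
      2 * α * (1 - α) * ((1 - α) ^ (d - 1) - α ^ (d - 1)) / (1 - 2 * α) ≤
        (μ {ω | numInternalEquilibria d (fun k => β k ω) = 1}).toReal) := by
  obtain ⟨hα0, hα1⟩ := hα
  have h1α : (0:ℝ) ≤ 1 - α := by linarith
  have hchoose : ∀ k : Fin d, (0:ℝ) < ((d-1).choose (k:ℕ) : ℝ) := fun k => by
    have := k.isLt
    exact_mod_cast Nat.choose_pos (by omega)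
  set Ev : (Fin d → Bool) → Set Ω :=
    fun σ => ⋂ k, {ω | if σ k then 0 < β k ω else β k ω < 0} with hEvdef
  have hset_t : ∀ (σ : Fin d → Bool) k, σ k = true →
      {ω | if σ k then 0 < β k ω else β k ω < 0} = {ω | 0 < β k ω} := by
    intro σ k h; simp [h]
  have hset_f : ∀ (σ : Fin d → Bool) k, σ k = false →
      {ω | if σ k then 0 < β k ω else β k ω < 0} = {ω | β k ω < 0} := by
    intro σ k h; simp [h]
  have hEvmeas : ∀ σ, MeasurableSet (Ev σ) := by
    intro σ
    apply MeasurableSet.iInter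
    intro k
    rcases Bool.eq_false_or_eq_true (σ k) with h | h
    · rw [hset_t σ k h]
      exact measurableSet_lt measurable_const (hmeas k)
    · rw [hset_f σ k h]
      exact measurableSet_lt (hmeas k) measurable_const
  have hEvμ : ∀ σ, μ (Ev σ) = ∏ k : Fin d, ENNReal.ofReal (if σ k then α else 1 - α) := by
    intro σ
    rw [hEvdef]
    rw [hindep.meas_iInter]
    · apply Finset.prod_congr rfl
      intro k _
      rcases Bool.eq_false_or_eq_true (σ k) with h | h
      · rw [hset_t σ k h, hpos k, h]; simp
      · rw [hset_f σ k h, hneg k, h]; simp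
    · intro k
      rcases Bool.eq_false_or_eq_true (σ k) with h | h
      · rw [hset_t σ k h]
        exact ⟨Set.Ioi 0, measurableSet_Ioi, rfl⟩
      · rw [hset_f σ k h]
        exact ⟨Set.Iio 0, measurableSet_Iio, rfl⟩
  have hmem : ∀ (σ : Fin d → Bool) (ω : Ω), ω ∈ Ev σ →
      ∀ k, (σ k = true → 0 < β k ω) ∧ (σ k = false → β k ω < 0) := by
    intro σ ω hω k
    have h := Set.mem_iInter.mp hω k
    constructor
    · intro ht; rw [hset_t σ k ht] at h; exact h
    · intro hf; rw [hset_f σ k hf] at h; exact h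
  have hdisjEv : ∀ σ σ' : Fin d → Bool, (∃ k, σ k ≠ σ' k) → Disjoint (Ev σ) (Ev σ') := by
    rintro σ σ' ⟨k, hk⟩
    rw [Set.disjoint_left]
    intro ω h1 h2
    have a1 := hmem σ ω h1 k
    have a2 := hmem σ' ω h2 k
    rcases Bool.eq_false_or_eq_true (σ k) with h | h <;>
      rcases Bool.eq_false_or_eq_true (σ' k) with h' | h'
    · exact hk (h.trans h'.symm)
    · linarith [a1.1 h, a2.2 h']
    · linarith [a1.2 h, a2.1 h']
    · exact hk (h.trans h'.symm)
  constructor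
  constructor
  · -- part (i) first inequality
    have hsub_pos : Ev (fun _ => true) ⊆
        {ω | numInternalEquilibria d (fun k => β k ω) = 0} := by
      intro ω hω
      rw [Set.mem_setOf_eq, numIE_def]
      apply count_eq_zero_of_pos (by omega)
      intro k
      exact mul_pos ((hmem _ ω hω k).1 rfl) (hchoose k)
    have hsub_neg : Ev (fun _ => false) ⊆
        {ω | numInternalEquilibria d (fun k => β k ω) = 0} := by
      intro ω hω
      rw [Set.mem_setOf_eq, numIE_def]
      apply count_eq_zero_of_neg (by omega)
      intro k
      have := (hmem _ ω hω k).2 rfl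
      nlinarith [hchoose k]
    have hμp : μ (Ev (fun _ => true)) = ENNReal.ofReal (α ^ d) := by
      rw [hEvμ]
      simp only [if_true]
      rw [Finset.prod_const, ← ENNReal.ofReal_pow hα0, Finset.card_univ, Fintype.card_fin]
    have hμn : μ (Ev (fun _ => false)) = ENNReal.ofReal ((1 - α) ^ d) := by
      rw [hEvμ]
      simp only [Bool.false_eq_true, if_false]
      rw [Finset.prod_const, ← ENNReal.ofReal_pow h1α, Finset.card_univ, Fintype.card_fin]
    have hdj : Disjoint (Ev (fun _ => true)) (Ev (fun _ => false)) :=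
      hdisjEv _ _ ⟨⟨0, by omega⟩, by simp⟩
    have hle : ENNReal.ofReal (α ^ d + (1 - α) ^ d) ≤
        μ {ω | numInternalEquilibria d (fun k => β k ω) = 0} := by
      rw [ENNReal.ofReal_add (pow_nonneg hα0 d) (pow_nonneg h1α d), ← hμp, ← hμn,
        ← measure_union hdj (hEvmeas _)]
      exact measure_mono (Set.union_subset hsub_pos hsub_neg)
    calc α ^ d + (1-α)^d
        = (ENNReal.ofReal (α ^ d + (1 - α) ^ d)).toReal := by
          rw [ENNReal.toReal_ofReal (add_nonneg (pow_nonneg hα0 _) (pow_nonneg h1α _))]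
      _ ≤ _ := ENNReal.toReal_mono (measure_ne_top μ _) hle
  · -- part (i) second inequality
    have hc := (convexOn_pow d).2 (Set.mem_Ici.mpr hα0) (Set.mem_Ici.mpr h1α)
      (by norm_num : (0:ℝ) ≤ 1/2) (by norm_num : (0:ℝ) ≤ 1/2) (by norm_num)
    simp only [smul_eq_mul] at hc
    have h12 : (1/2*α + 1/2*(1-α)) = (1/2 : ℝ) := by ring
    rw [h12] at hc
    have h2d : (2:ℝ)^d = 2^(d-1)*2 := by
      rw [← pow_succ]; congr 1; omega
    have key : ((1:ℝ)/2)^d = 1/2^(d-1)/2 := by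
      rw [div_pow, one_pow, div_div, ← h2d]
    rw [key] at hc
    linarith
  · -- part (ii)
    intro hαhalf
    set σf : Bool × ℕ → Fin d → Bool :=
      fun bj k => if (k:ℕ) < bj.2 then bj.1 else !bj.1 with hσfdef
    set t : Finset (Bool × ℕ) := Finset.univ ×ˢ Finset.Ico 1 d with htdef
    have hmemt : ∀ bj : Bool × ℕ, bj ∈ t ↔ 1 ≤ bj.2 ∧ bj.2 < d := by
      intro bj
      rw [htdef, Finset.mem_product, Finset.mem_Ico]
      simp
    have hsub : ∀ bj ∈ t, Ev (σf bj) ⊆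
        {ω | numInternalEquilibria d (fun k => β k ω) = 1} := by
      rintro ⟨b, j⟩ hbj ω hω
      obtain ⟨hj1, hjd⟩ := (hmemt _).mp hbj
      rw [Set.mem_setOf_eq, numIE_def]
      have hσ : ∀ k : Fin d, ((k:ℕ) < j → σf (b, j) k = b) ∧ (j ≤ (k:ℕ) → σf (b, j) k = !b) := by
        intro k
        constructor
        · intro h; simp [hσfdef, h]
        · intro h; simp [hσfdef, Nat.not_lt.mpr h]
      cases b
      · apply count_eq_one' hd _ j hj1 hjd
        · intro k hk
          have := (hmem _ ω hω k).2 ((hσ k).1 hk)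
          nlinarith [hchoose k]
        · intro k hk
          exact mul_pos ((hmem _ ω hω k).1 ((hσ k).2 hk)) (hchoose k)
      · apply count_eq_one hd _ j hj1 hjd
        · intro k hk
          exact mul_pos ((hmem _ ω hω k).1 ((hσ k).1 hk)) (hchoose k)
        · intro k hk
          have := (hmem _ ω hω k).2 ((hσ k).2 hk)
          nlinarith [hchoose k]
    have hpw : (↑t : Set (Bool × ℕ)).PairwiseDisjoint (fun bj => Ev (σf bj)) := by
      rintro ⟨b, j⟩ hx ⟨b', j'⟩ hy hxy
      obtain ⟨hj1, hjd⟩ := (hmemt _).mp (by simpa using hx)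
      obtain ⟨hj1', hjd'⟩ := (hmemt _).mp (by simpa using hy)
      apply hdisjEv
      by_cases hb : b = b'
      · have hj : j ≠ j' := fun h => hxy (by rw [hb, h])
        rcases Nat.lt_or_ge j j' with h | h
        · refine ⟨⟨j, by omega⟩, ?_⟩
          have e1 : σf (b, j) ⟨j, by omega⟩ = !b := by simp [hσfdef]
          have e2 : σf (b', j') ⟨j, by omega⟩ = b' := by simp [hσfdef, h]
          rw [e1, e2, ← hb]
          simp
        · have h' : j' < j := by omega
          refine ⟨⟨j', by omega⟩, ?_⟩
          have e1 : σf (b, j) ⟨j', by omega⟩ = b := by simp [hσfdef, h']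
          have e2 : σf (b', j') ⟨j', by omega⟩ = !b' := by simp [hσfdef]
          rw [e1, e2, ← hb]
          simp
      · refine ⟨⟨0, by omega⟩, ?_⟩
        have e1 : σf (b, j) ⟨0, by omega⟩ = b := by simp [hσfdef]; omega
        have e2 : σf (b', j') ⟨0, by omega⟩ = b' := by simp [hσfdef]; omega
        rw [e1, e2]
        exact hb
    have hval : ∀ bj ∈ t, μ (Ev (σf bj)) = ENNReal.ofReal
        (if bj.1 then α^bj.2 * (1-α)^(d-bj.2) else (1-α)^bj.2 * α^(d-bj.2)) := by
      rintro ⟨b, j⟩ hbj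
      obtain ⟨hj1, hjd⟩ := (hmemt _).mp hbj
      rw [hEvμ]
      cases b
      · have : ∀ k : Fin d, ENNReal.ofReal (if σf (false, j) k then α else 1 - α)
            = ENNReal.ofReal (if (k:ℕ) < j then 1 - α else α) := by
          intro k
          by_cases h : (k:ℕ) < j <;> simp [hσfdef, h]
        rw [Finset.prod_congr rfl fun k _ => this k, prod_pattern d j (by omega) _ _ h1α hα0]
        simp
      · have : ∀ k : Fin d, ENNReal.ofReal (if σf (true, j) k then α else 1 - α)
            = ENNReal.ofReal (if (k:ℕ) < j then α else 1 - α) := by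
          intro k
          by_cases h : (k:ℕ) < j <;> simp [hσfdef, h]
        rw [Finset.prod_congr rfl fun k _ => this k, prod_pattern d j (by omega) _ _ hα0 h1α]
        simp
    have hnn : ∀ bj ∈ t, (0:ℝ) ≤
        (if bj.1 then α^bj.2 * (1-α)^(d-bj.2) else (1-α)^bj.2 * α^(d-bj.2)) := by
      rintro ⟨b, j⟩ _
      cases b <;> simp <;> positivity
    have hle : ENNReal.ofReal (∑ bj ∈ t,
        (if bj.1 then α^bj.2 * (1-α)^(d-bj.2) else (1-α)^bj.2 * α^(d-bj.2)))
        ≤ μ {ω | numInternalEquilibria d (fun k => β k ω) = 1} := by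
      rw [ENNReal.ofReal_sum_of_nonneg hnn]
      rw [Finset.sum_congr rfl fun bj hbj => (hval bj hbj).symm]
      rw [← measure_biUnion_finset hpw (fun bj _ => hEvmeas _)]
      exact measure_mono (Set.iUnion₂_subset hsub)
    have hsumeq : ∑ bj ∈ t,
        (if bj.1 then α^bj.2 * (1-α)^(d-bj.2) else (1-α)^bj.2 * α^(d-bj.2))
        = 2*α*(1-α)*((1-α)^(d-1) - α^(d-1))/(1-2*α) := by
      rw [htdef, Finset.sum_product]
      rw [Fintype.sum_bool]
      simp only [if_true, Bool.false_eq_true, if_false]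
      rw [← Finset.sum_add_distrib]
      rw [← sum_pattern d hd α hαhalf]
    calc 2*α*(1-α)*((1-α)^(d-1) - α^(d-1))/(1-2*α)
        = (ENNReal.ofReal (∑ bj ∈ t,
            (if bj.1 then α^bj.2 * (1-α)^(d-bj.2) else (1-α)^bj.2 * α^(d-bj.2)))).toReal := by
          rw [ENNReal.toReal_ofReal (Finset.sum_nonneg hnn), hsumeq]
      _ ≤ _ := ENNReal.toReal_mono (measure_ne_top μ _) hle
end

section
/- Let d ≥ 2, α ∈ [0,1], and let β_0, …, β_{d−1} be independent real-valued random variables with P(β_k > 0) = α and P(β_k < 0) = 1 − α for every k. With p_m the probability that P(y) = Σ_{k=0}^{d−1} β_k·C(d−1,k)·y^k has exactly m roots in (0, ∞) counted with multiplicity, one has: (i) p_{d−1} ≤ (α(1−α))^{(d−1)/2} if d is odd and p_{d−1} ≤ 2·(α(1−α))^{d/2} if d is even, and in both cases p_{d−1} ≤ 1/2^{d−1}; (ii) if d ≥ 3 is odd, then p_{d−2} ≤ (d−1)·(α(1−α))^{(d−1)/2}; and (iii) if d ≥ 3, then p_{d−2} ≤ (d−1)/2^{d−1}. -/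
open MeasureTheory ProbabilityTheory Polynomial

namespace EvoGameAux
open Polynomial



lemma coeff_XsubC_mul_zero (a : ℝ) (p : ℝ[X]) : ((X - C a) * p).coeff 0 = -a * p.coeff 0 := by
  rw [Polynomial.mul_coeff_zero]
  simp

lemma coeff_XsubC_mul_succ (a : ℝ) (p : ℝ[X]) (k : ℕ) :
    ((X - C a) * p).coeff (k + 1) = p.coeff k - a * p.coeff (k + 1) := by
  rw [sub_mul, Polynomial.coeff_sub, Polynomial.coeff_X_mul, Polynomial.coeff_C_mul]

lemma psi : ∀ (S : Multiset ℝ), (∀ a ∈ S, 0 < a) → ∀ k : ℕ,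
    0 ≤ (-1 : ℝ) ^ (Multiset.card S + k) * ((S.map fun a => X - C a).prod).coeff k := by
  intro S
  induction S using Multiset.induction_on with
  | empty =>
      intro _ k
      rcases k with _ | k
      · simp
      · simp [Polynomial.coeff_one]
  | cons a s ih =>
      intro h k
      have ha : 0 < a := h a (Multiset.mem_cons_self _ _)
      have hs : ∀ b ∈ s, 0 < b := fun b hb => h b (Multiset.mem_cons_of_mem hb)
      rw [Multiset.map_cons, Multiset.prod_cons, Multiset.card_cons]
      set p := (s.map fun a => X - C a).prod with hp
      rcases k with _ | k
      · rw [coeff_XsubC_mul_zero]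
        have h0 := ih hs 0
        have : (-1 : ℝ) ^ (Multiset.card s + 1 + 0) * (-a * p.coeff 0)
            = a * ((-1 : ℝ) ^ (Multiset.card s + 0) * p.coeff 0) := by ring
        rw [this]
        exact mul_nonneg ha.le h0
      · rw [coeff_XsubC_mul_succ]
        have h1 := ih hs k
        have h2 := ih hs (k + 1)
        have : (-1 : ℝ) ^ (Multiset.card s + 1 + (k + 1)) * (p.coeff k - a * p.coeff (k + 1))
            = (-1 : ℝ) ^ (Multiset.card s + k) * p.coeff k
              + a * ((-1 : ℝ) ^ (Multiset.card s + (k + 1)) * p.coeff (k + 1)) := by ring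
        rw [this]
        exact add_nonneg h1 (mul_nonneg ha.le h2)

lemma phi : ∀ (S : Multiset ℝ), (∀ a ∈ S, 0 < a) → ∀ q : ℝ, q < 0 →
    ∃ m : ℕ, 1 ≤ m ∧
      (∀ k < m, 0 ≤ (-1 : ℝ) ^ (Multiset.card S + k)
          * (((q ::ₘ S).map fun a => X - C a).prod).coeff k) ∧
      (∀ k, m ≤ k → (-1 : ℝ) ^ (Multiset.card S + k)
          * (((q ::ₘ S).map fun a => X - C a).prod).coeff k ≤ 0) := by
  intro S
  induction S using Multiset.induction_on with
  | empty =>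
      intro _ q hq
      refine ⟨1, le_refl _, ?_, ?_⟩
      · intro k hk
        interval_cases k
        simp [coeff_XsubC_mul_zero, Polynomial.coeff_one]
        linarith
      · intro k hk
        rcases k with _ | k
        · omega
        rcases k with _ | k
        · simp [coeff_XsubC_mul_succ, Polynomial.coeff_one, Polynomial.coeff_X]
        · simp [coeff_XsubC_mul_succ, Polynomial.coeff_one, Polynomial.coeff_X]
  | cons a s ih =>
      intro h q hq
      have ha : 0 < a := h a (Multiset.mem_cons_self _ _)
      have hs : ∀ b ∈ s, 0 < b := fun b hb => h b (Multiset.mem_cons_of_mem hb)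
      obtain ⟨m, hm1, hpos, hneg⟩ := ih hs q hq
      have hswap : (q ::ₘ a ::ₘ s) = a ::ₘ q ::ₘ s := Multiset.cons_swap _ _ _
      rw [hswap]
      set p := ((q ::ₘ s).map fun a => X - C a).prod with hp
      have hcard : Multiset.card (a ::ₘ s) = Multiset.card s + 1 := Multiset.card_cons _ _
      rw [hcard, Multiset.map_cons, Multiset.prod_cons]
      -- abbreviation for new sign values
      have key_pos : ∀ k < m, 0 ≤ (-1 : ℝ) ^ (Multiset.card s + 1 + k)
          * ((X - C a) * p).coeff k := by
        intro k hk
        rcases k with _ | k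
        · rw [coeff_XsubC_mul_zero]
          have h0 := hpos 0 (by omega)
          have : (-1 : ℝ) ^ (Multiset.card s + 1 + 0) * (-a * p.coeff 0)
              = a * ((-1 : ℝ) ^ (Multiset.card s + 0) * p.coeff 0) := by ring
          rw [this]; exact mul_nonneg ha.le h0
        · rw [coeff_XsubC_mul_succ]
          have h1 := hpos k (by omega)
          have h2 := hpos (k + 1) (by omega)
          have : (-1 : ℝ) ^ (Multiset.card s + 1 + (k + 1)) * (p.coeff k - a * p.coeff (k + 1))
              = (-1 : ℝ) ^ (Multiset.card s + k) * p.coeff k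
                + a * ((-1 : ℝ) ^ (Multiset.card s + (k + 1)) * p.coeff (k + 1)) := by ring
          rw [this]; exact add_nonneg h1 (mul_nonneg ha.le h2)
      have key_neg : ∀ k, m + 1 ≤ k → (-1 : ℝ) ^ (Multiset.card s + 1 + k)
          * ((X - C a) * p).coeff k ≤ 0 := by
        intro k hk
        rcases k with _ | k
        · omega
        · rw [coeff_XsubC_mul_succ]
          have h1 := hneg k (by omega)
          have h2 := hneg (k + 1) (by omega)
          have : (-1 : ℝ) ^ (Multiset.card s + 1 + (k + 1)) * (p.coeff k - a * p.coeff (k + 1))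
              = (-1 : ℝ) ^ (Multiset.card s + k) * p.coeff k
                + a * ((-1 : ℝ) ^ (Multiset.card s + (k + 1)) * p.coeff (k + 1)) := by ring
          rw [this]
          have := mul_nonpos_of_nonneg_of_nonpos ha.le h2
          linarith
      by_cases hc : 0 ≤ (-1 : ℝ) ^ (Multiset.card s + 1 + m) * ((X - C a) * p).coeff m
      · refine ⟨m + 1, by omega, ?_, ?_⟩
        · intro k hk
          rcases Nat.lt_or_ge k m with h' | h'
          · exact key_pos k h'
          · have : k = m := by omega
            subst this; exact hc
        · exact key_neg
      · refine ⟨m, hm1, key_pos, ?_⟩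
        intro k hk
        rcases Nat.lt_or_ge k (m + 1) with h' | h'
        · have : k = m := by omega
          subst this; exact le_of_not_ge hc
        · exact key_neg k h'


noncomputable def Pb (d : ℕ) (β : Fin d → ℝ) : ℝ[X] :=
  ∑ k : Fin d, Polynomial.C (β k * ((d - 1).choose (k : ℕ) : ℝ)) * Polynomial.X ^ (k : ℕ)

lemma coeff_Pb (d : ℕ) (b : Fin d → ℝ) (k : ℕ) (hk : k < d) :
    (Pb d b).coeff k = b ⟨k, hk⟩ * ((d - 1).choose k : ℝ) := by
  rw [Pb, Polynomial.finset_sum_coeff]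
  rw [Finset.sum_eq_single (⟨k, hk⟩ : Fin d)]
  · rw [Polynomial.coeff_C_mul, Polynomial.coeff_X_pow]
    simp
  · intro i _ hne
    have : (i : ℕ) ≠ k := by
      intro h; exact hne (Fin.ext h)
    rw [Polynomial.coeff_C_mul, Polynomial.coeff_X_pow, if_neg (Ne.symm this), mul_zero]
  · intro h; exact absurd (Finset.mem_univ _) h

lemma coeff_Pb_ge (d : ℕ) (b : Fin d → ℝ) (k : ℕ) (hk : d ≤ k) :
    (Pb d b).coeff k = 0 := by
  rw [Pb, Polynomial.finset_sum_coeff]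
  apply Finset.sum_eq_zero
  intro i _
  have : (i : ℕ) ≠ k := by have := i.isLt; omega
  rw [Polynomial.coeff_C_mul, Polynomial.coeff_X_pow, if_neg (Ne.symm this), mul_zero]

lemma coeff_Pb_ne (d : ℕ) (b : Fin d → ℝ) (hb : ∀ k, b k ≠ 0) (k : ℕ) (hk : k < d) :
    (Pb d b).coeff k ≠ 0 := by
  rw [coeff_Pb d b k hk]
  refine mul_ne_zero (hb _) ?_
  have : 0 < (d - 1).choose k := Nat.choose_pos (by omega)
  positivity

lemma coeff_Pb_pos_iff (d : ℕ) (b : Fin d → ℝ) (k : ℕ) (hk : k < d) :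
    (0 < (Pb d b).coeff k) ↔ 0 < b ⟨k, hk⟩ := by
  rw [coeff_Pb d b k hk]
  have : (0 : ℝ) < ((d - 1).choose k : ℝ) := by
    have : 0 < (d - 1).choose k := Nat.choose_pos (by omega)
    exact_mod_cast this
  exact mul_pos_iff_of_pos_right this

lemma natDegree_Pb (d : ℕ) (hd : 1 ≤ d) (b : Fin d → ℝ) (hb : ∀ k, b k ≠ 0) :
    (Pb d b).natDegree = d - 1 := by
  apply le_antisymm
  · rw [Polynomial.natDegree_le_iff_coeff_eq_zero]
    intro m hm
    exact coeff_Pb_ge d b m (by omega)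
  · apply Polynomial.le_natDegree_of_ne_zero
    exact coeff_Pb_ne d b hb (d - 1) (by omega)

lemma Pb_ne_zero (d : ℕ) (hd : 1 ≤ d) (b : Fin d → ℝ) (hb : ∀ k, b k ≠ 0) :
    Pb d b ≠ 0 := by
  intro h
  have := coeff_Pb_ne d b hb (d - 1) (by omega)
  rw [h] at this
  simp at this

lemma leadingCoeff_Pb (d : ℕ) (hd : 1 ≤ d) (b : Fin d → ℝ) (hb : ∀ k, b k ≠ 0) :
    (Pb d b).leadingCoeff = (Pb d b).coeff (d - 1) := by
  rw [Polynomial.leadingCoeff, natDegree_Pb d hd b hb]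

lemma neg_one_pow_mul_pair (c k : ℕ) (x y : ℝ) :
    ((-1 : ℝ) ^ (c + k) * x) * ((-1 : ℝ) ^ (c + (k + 1)) * y) = -(x * y) := by
  have h : (-1 : ℝ) ^ (c + k) * (-1 : ℝ) ^ (c + (k + 1)) = -1 := by
    rw [← pow_add]
    have : c + k + (c + (k + 1)) = 2 * (c + k) + 1 := by omega
    rw [this, pow_succ, pow_mul]
    norm_num
  calc ((-1 : ℝ) ^ (c + k) * x) * ((-1 : ℝ) ^ (c + (k + 1)) * y)
      = ((-1 : ℝ) ^ (c + k) * (-1 : ℝ) ^ (c + (k + 1))) * (x * y) := by ring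
    _ = -(x * y) := by rw [h]; ring


lemma pattern1 (g : ℕ → ℝ) (n : ℕ) (h : ∀ k, k + 1 < n → g k * g (k + 1) < 0) :
    ∀ k, k < n → (0 < g k ↔ (Even k ↔ 0 < g 0)) := by
  intro k
  induction k with
  | zero => intro _; simp
  | succ k ih =>
      intro hk
      have hk' : k < n := by omega
      have hprod := h k (by omega)
      have hiff := ih hk'
      have h1 : 0 < g (k + 1) ↔ ¬ (0 < g k) := by
        rcases mul_neg_iff.mp hprod with ⟨h2, h3⟩ | ⟨h2, h3⟩
        · exact iff_of_false (by linarith) (by simp [h2])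
        · exact iff_of_true h3 (by intro hx; linarith)
      rw [Nat.even_add_one, h1, hiff]
      tauto

lemma pattern2 (g : ℕ → ℝ) (n j : ℕ) (hj : j + 1 < n)
    (hdef : 0 < g j * g (j + 1))
    (halt : ∀ k, k + 1 < n → k ≠ j → g k * g (k + 1) < 0) :
    ∀ k, k < n → (0 < g k ↔ ((Even k ↔ k ≤ j) ↔ 0 < g 0)) := by
  intro k
  induction k with
  | zero => intro _; simp [Nat.zero_le]
  | succ k ih =>
      intro hk
      have hk' : k < n := by omega
      have hiff := ih hk'
      by_cases hkj : k = j
      · subst hkj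
        have h1 : 0 < g (k + 1) ↔ 0 < g k := by
          rcases mul_pos_iff.mp hdef with ⟨h2, h3⟩ | ⟨h2, h3⟩
          · exact iff_of_true h3 h2
          · exact iff_of_false (by linarith) (by linarith)
        rw [h1, hiff, Nat.even_add_one]
        have e1 : k ≤ k := le_refl k
        have e2 : ¬ (k + 1 ≤ k) := by omega
        tauto
      · have hprod := halt k (by omega) hkj
        have h1 : 0 < g (k + 1) ↔ ¬ (0 < g k) := by
          rcases mul_neg_iff.mp hprod with ⟨h2, h3⟩ | ⟨h2, h3⟩
          · exact iff_of_false (by linarith) (by simp [h2])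
          · exact iff_of_true h3 (by intro hx; linarith)
        rw [h1, hiff, Nat.even_add_one]
        have e1 : k ≤ j ↔ k + 1 ≤ j := by omega
        rw [e1]
        by_cases hE : Even k <;> by_cases hL : k + 1 ≤ j <;> by_cases hG : 0 < g 0 <;>
          simp [hE, hL, hG]


lemma det1 (d : ℕ) (hd : 2 ≤ d) (b : Fin d → ℝ) (hb : ∀ k, b k ≠ 0)
    (hnum : Multiset.card ((Pb d b).roots.filter (fun y => 0 < y)) = d - 1) :
    ∀ k, k + 1 < d → (Pb d b).coeff k * (Pb d b).coeff (k + 1) < 0 := by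
  set P := Pb d b with hP
  have hd1 : 1 ≤ d := by omega
  have hP0 : P ≠ 0 := Pb_ne_zero d hd1 b hb
  have hdeg : P.natDegree = d - 1 := natDegree_Pb d hd1 b hb
  have hcard_le : Multiset.card P.roots ≤ d - 1 := by
    simpa [hdeg] using P.card_roots'
  have hfil_le : (P.roots.filter (fun y => 0 < y)) ≤ P.roots := Multiset.filter_le _ _
  have hcard_eq : Multiset.card P.roots = d - 1 := by
    have := Multiset.card_le_card hfil_le
    omega
  have hfil_eq : P.roots.filter (fun y => 0 < y) = P.roots :=
    Multiset.eq_of_le_of_card_le hfil_le (by omega)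
  have hpos : ∀ a ∈ P.roots, 0 < a := by
    intro a ha
    rw [← hfil_eq] at ha
    exact (Multiset.mem_filter.mp ha).2
  have hfac : Polynomial.C P.leadingCoeff * (P.roots.map fun a => X - C a).prod = P :=
    Polynomial.C_leadingCoeff_mul_prod_multiset_X_sub_C (by rw [hdeg, hcard_eq])
  set M := (P.roots.map fun a => X - C a).prod with hM
  have hcoeff : ∀ k : ℕ, P.coeff k = P.leadingCoeff * M.coeff k := by
    intro k
    conv_lhs => rw [← hfac]
    rw [Polynomial.coeff_C_mul]
  have hpsi := psi P.roots hpos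
  rw [hcard_eq] at hpsi
  intro k hk1
  have hk : k < d := by omega
  have hMM : M.coeff k * M.coeff (k + 1) ≤ 0 := by
    have h1 := mul_nonneg (hpsi k) (hpsi (k + 1))
    rw [neg_one_pow_mul_pair (d - 1) k] at h1
    linarith
  have hPP : P.coeff k * P.coeff (k + 1)
      = P.leadingCoeff ^ 2 * (M.coeff k * M.coeff (k + 1)) := by
    rw [hcoeff k, hcoeff (k + 1)]; ring
  have hle : P.coeff k * P.coeff (k + 1) ≤ 0 := by
    rw [hPP]
    exact mul_nonpos_of_nonneg_of_nonpos (sq_nonneg _) hMM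
  have hne : P.coeff k * P.coeff (k + 1) ≠ 0 :=
    mul_ne_zero (coeff_Pb_ne d b hb k hk) (coeff_Pb_ne d b hb (k + 1) hk1)
  exact lt_of_le_of_ne hle hne

lemma det2 (d : ℕ) (hd : 3 ≤ d) (b : Fin d → ℝ) (hb : ∀ k, b k ≠ 0)
    (hnum : Multiset.card ((Pb d b).roots.filter (fun y => 0 < y)) = d - 2) :
    ∃ j, j + 1 < d ∧ 0 < (Pb d b).coeff j * (Pb d b).coeff (j + 1) ∧
      ∀ k, k + 1 < d → k ≠ j → (Pb d b).coeff k * (Pb d b).coeff (k + 1) < 0 := by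
  set P := Pb d b with hP
  have hd1 : 1 ≤ d := by omega
  have hP0 : P ≠ 0 := Pb_ne_zero d hd1 b hb
  have hdeg : P.natDegree = d - 1 := natDegree_Pb d hd1 b hb
  have hcard_le : Multiset.card P.roots ≤ d - 1 := by
    simpa [hdeg] using P.card_roots'
  have hfil_le : (P.roots.filter (fun y => 0 < y)) ≤ P.roots := Multiset.filter_le _ _
  have hfil_card : d - 2 ≤ Multiset.card P.roots := by
    have := Multiset.card_le_card hfil_le
    omega
  -- exclude card roots = d - 2
  have hcard_eq : Multiset.card P.roots = d - 1 := by
    rcases (by omega : Multiset.card P.roots = d - 2 ∨ Multiset.card P.roots = d - 1) with hc | hc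
    · exfalso
      obtain ⟨Q, hQ⟩ := P.prod_multiset_X_sub_C_dvd
      have hQ0 : Q ≠ 0 := by
        intro h; rw [h, mul_zero] at hQ; exact hP0 hQ
      have hMr0 : ((P.roots.map fun a => X - C a).prod : ℝ[X]) ≠ 0 := by
        intro h; rw [h, zero_mul] at hQ; exact hP0 hQ
      have hdegQ : Q.natDegree = 1 := by
        have h1 := Polynomial.natDegree_mul hMr0 hQ0
        rw [← hQ] at h1
        rw [Polynomial.natDegree_multiset_prod_X_sub_C_eq_card] at h1
        omega
      have hroots : P.roots = P.roots + Q.roots := by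
        conv_lhs => rw [hQ]
        rw [Polynomial.roots_mul (hQ ▸ hP0), Polynomial.roots_multiset_prod_X_sub_C]
      have hQroots : Q.roots = 0 := by
        have := congrArg Multiset.card hroots
        rw [Multiset.card_add] at this
        have : Multiset.card Q.roots = 0 := by omega
        exact Multiset.card_eq_zero.mp this
      have hc1 : Q.coeff 1 ≠ 0 := by
        have : Q.coeff 1 = Q.leadingCoeff := by rw [Polynomial.leadingCoeff, hdegQ]
        rw [this]
        exact Polynomial.leadingCoeff_ne_zero.mpr hQ0
      have hxroot : Q.IsRoot (-(Q.coeff 0) / Q.coeff 1) := by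
        have hQeq : Q = Polynomial.C (Q.coeff 1) * X + Polynomial.C (Q.coeff 0) :=
          Polynomial.eq_X_add_C_of_natDegree_le_one (by omega)
        rw [Polynomial.IsRoot, Polynomial.eval_eq_sum_range, hdegQ, Finset.sum_range_succ,
          Finset.sum_range_one, pow_zero, pow_one, mul_one, mul_comm, div_mul_cancel₀ _ hc1]
        ring
      have : (-(Q.coeff 0) / Q.coeff 1) ∈ Q.roots := by
        rw [Polynomial.mem_roots hQ0]
        exact hxroot
      rw [hQroots] at this
      simp at this
    · exact hc
  -- the nonpositive root
  set S := P.roots.filter (fun y => 0 < y) with hS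
  set T := P.roots.filter (fun y => ¬ 0 < y) with hT
  have hST : S + T = P.roots := Multiset.filter_add_not _ _
  have hcardT : Multiset.card T = 1 := by
    have := congrArg Multiset.card hST
    rw [Multiset.card_add] at this
    omega
  obtain ⟨q, hq⟩ := Multiset.card_eq_one.mp hcardT
  have hq_mem : q ∈ P.roots := by
    rw [← hST]
    exact Multiset.mem_add.mpr (Or.inr (by rw [hq]; exact Multiset.mem_singleton_self q))
  have hq_npos : ¬ 0 < q := by
    have : q ∈ T := by rw [hq]; exact Multiset.mem_singleton_self q
    exact (Multiset.mem_filter.mp this).2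
  have hq_ne : q ≠ 0 := by
    intro h
    have hroot : P.IsRoot q := Polynomial.isRoot_of_mem_roots hq_mem
    rw [h] at hroot
    rw [Polynomial.IsRoot, ← Polynomial.coeff_zero_eq_eval_zero] at hroot
    exact coeff_Pb_ne d b hb 0 (by omega) hroot
  have hq_neg : q < 0 := by
    rcases lt_trichotomy q 0 with h | h | h
    · exact h
    · exact absurd h hq_ne
    · exact absurd h hq_npos
  have hroots_eq : P.roots = q ::ₘ S := by
    rw [← hST, hq]
    rw [add_comm]
    rfl
  have hS_pos : ∀ a ∈ S, 0 < a := by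
    intro a ha
    exact (Multiset.mem_filter.mp ha).2
  have hcardS : Multiset.card S = d - 2 := hnum
  have hfac : Polynomial.C P.leadingCoeff * ((q ::ₘ S).map fun a => X - C a).prod = P := by
    rw [← hroots_eq]
    exact Polynomial.C_leadingCoeff_mul_prod_multiset_X_sub_C (by rw [hdeg, hcard_eq])
  set M := ((q ::ₘ S).map fun a => X - C a).prod with hM
  have hcoeff : ∀ k : ℕ, P.coeff k = P.leadingCoeff * M.coeff k := by
    intro k
    conv_lhs => rw [← hfac]
    rw [Polynomial.coeff_C_mul]
  obtain ⟨m, hm1, hpos, hneg⟩ := phi S hS_pos q hq_neg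
  rw [hcardS] at hpos hneg
  have hlead : P.leadingCoeff ≠ 0 := Polynomial.leadingCoeff_ne_zero.mpr hP0
  have hMtop : M.coeff (d - 1) = 1 := by
    have h1 := hcoeff (d - 1)
    have h2 : P.coeff (d - 1) = P.leadingCoeff := by
      rw [Polynomial.leadingCoeff, hdeg]
    rw [h2] at h1
    field_simp at h1
    linarith [h1]
  have hm_le : m ≤ d - 1 := by
    by_contra hcon
    have := hpos (d - 1) (by omega)
    rw [hMtop, mul_one] at this
    have hodd : Odd (d - 2 + (d - 1)) := ⟨d - 2, by omega⟩
    rw [hodd.neg_one_pow] at this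
    linarith
  refine ⟨m - 1, by omega, ?_, ?_⟩
  · -- defect at m - 1
    have e1 : m - 1 + 1 = m := by omega
    have hs1 := hpos (m - 1) (by omega)
    have hs2 := hneg m (le_refl m)
    have hMM : 0 ≤ M.coeff (m - 1) * M.coeff m := by
      have h1 := mul_nonpos_of_nonneg_of_nonpos hs1 hs2
      rw [show d - 2 + m = d - 2 + (m - 1 + 1) by omega] at h1
      rw [neg_one_pow_mul_pair (d - 2) (m - 1)] at h1
      linarith
    have hPP : P.coeff (m - 1) * P.coeff (m - 1 + 1)
        = P.leadingCoeff ^ 2 * (M.coeff (m - 1) * M.coeff m) := by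
      rw [hcoeff (m - 1), hcoeff (m - 1 + 1), e1]; ring
    have hge : 0 ≤ P.coeff (m - 1) * P.coeff (m - 1 + 1) := by
      rw [hPP]
      exact mul_nonneg (sq_nonneg _) hMM
    have hne : P.coeff (m - 1) * P.coeff (m - 1 + 1) ≠ 0 :=
      mul_ne_zero (coeff_Pb_ne d b hb (m - 1) (by omega))
        (coeff_Pb_ne d b hb (m - 1 + 1) (by omega))
    exact lt_of_le_of_ne hge (Ne.symm hne)
  · intro k hk1 hkj
    have hk : k < d := by omega
    have hMM : M.coeff k * M.coeff (k + 1) ≤ 0 := by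
      rcases Nat.lt_or_ge (k + 1) m with h' | h'
      · have h1 := mul_nonneg (hpos k (by omega)) (hpos (k + 1) h')
        rw [neg_one_pow_mul_pair (d - 2) k] at h1
        linarith
      · have hk_ge : m ≤ k := by omega
        have h1 := mul_nonneg_iff.mpr (Or.inr ⟨hneg k hk_ge, hneg (k + 1) (by omega)⟩)
        rw [neg_one_pow_mul_pair (d - 2) k] at h1
        linarith
    have hPP : P.coeff k * P.coeff (k + 1)
        = P.leadingCoeff ^ 2 * (M.coeff k * M.coeff (k + 1)) := by
      rw [hcoeff k, hcoeff (k + 1)]; ring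
    have hle : P.coeff k * P.coeff (k + 1) ≤ 0 := by
      rw [hPP]
      exact mul_nonpos_of_nonneg_of_nonpos (sq_nonneg _) hMM
    have hne : P.coeff k * P.coeff (k + 1) ≠ 0 :=
      mul_ne_zero (coeff_Pb_ne d b hb k hk) (coeff_Pb_ne d b hb (k + 1) hk1)
    exact lt_of_le_of_ne hle hne


lemma countEven : ∀ n, ((Finset.range n).filter (fun k => Even k)).card = (n + 1) / 2 := by
  intro n
  induction n with
  | zero => simp
  | succ n ih =>
      rw [Finset.range_add_one, Finset.filter_insert]
      by_cases h : Even n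
      · rw [if_pos h, Finset.card_insert_of_notMem (by simp), ih]
        have := Nat.even_iff.mp h
        omega
      · rw [if_neg h, ih]
        have := Nat.odd_iff.mp (Nat.not_even_iff_odd.mp h)
        omega

lemma countPat (j : ℕ) : ∀ n, j + 1 ≤ n →
    ((Finset.range n).filter (fun k => Even k ↔ k ≤ j)).card
      = n / 2 + (if Even j then 1 else 0) := by
  intro n hn
  induction n, hn using Nat.le_induction with
  | base =>
      have hcongr : ((Finset.range (j + 1)).filter (fun k => Even k ↔ k ≤ j))
          = ((Finset.range (j + 1)).filter (fun k => Even k)) := by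
        apply Finset.filter_congr
        intro x hx
        have : x ≤ j := by
          have := Finset.mem_range.mp hx; omega
        simp [this]
      rw [hcongr, countEven]
      rcases Nat.even_or_odd j with h | h
      · rw [if_pos h]; have := Nat.even_iff.mp h; omega
      · rw [if_neg (by exact Nat.not_even_iff_odd.mpr h)]
        have := Nat.odd_iff.mp h; omega
  | succ n hn ih =>
      rw [Finset.range_add_one, Finset.filter_insert]
      by_cases hE : Even n
      · rw [if_neg (by intro hcon; have := hcon.mp hE; omega)]
        rw [ih]
        have := Nat.even_iff.mp hE
        omega
      · rw [if_pos (iff_of_false hE (by omega)), Finset.card_insert_of_notMem (by simp), ih]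
        have := Nat.odd_iff.mp (Nat.not_even_iff_odd.mp hE)
        omega

lemma realA (x y : ℝ) (t : ℕ) : x ^ (t + 1) * y ^ t + x ^ t * y ^ (t + 1) = (x * y) ^ t * (x + y) := by
  rw [mul_pow]; ring

lemma realB (x : ℝ) (hx : 0 ≤ x) (hx1 : x ≤ 1) (t : ℕ) :
    (x * (1 - x)) ^ t ≤ (1 / 2) ^ (2 * t) := by
  have h1 : x * (1 - x) ≤ 1 / 4 := by nlinarith [sq_nonneg (2 * x - 1)]
  have h0 : 0 ≤ x * (1 - x) := by nlinarith
  calc (x * (1 - x)) ^ t ≤ (1 / 4) ^ t := pow_le_pow_left₀ h0 h1 t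
    _ = (1 / 2) ^ (2 * t) := by
        rw [pow_mul]; norm_num

lemma realC (u : ℝ) (hu : 0 ≤ u) (hu4 : 4 * u ≤ 1) (k : ℕ) :
    u ^ (k + 1) * (1 - 2 * u) ≤ (1 / 2) ^ (2 * k + 3) := by
  have h1 : (4 * u) ^ (k + 1) ≤ (4 * u) ^ 1 :=
    pow_le_pow_of_le_one (by linarith) (by linarith) (by omega)
  have h2 : (4 * u) * (2 - 4 * u) ≤ 1 := by nlinarith
  have h3 : (0 : ℝ) ≤ 2 - 4 * u := by linarith
  have h4 : (4 * u) ^ (k + 1) * (2 - 4 * u) ≤ 1 := by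
    calc (4 * u) ^ (k + 1) * (2 - 4 * u) ≤ (4 * u) ^ 1 * (2 - 4 * u) :=
          mul_le_mul_of_nonneg_right h1 h3
      _ = (4 * u) * (2 - 4 * u) := by rw [pow_one]
      _ ≤ 1 := h2
  have e3 : u ^ (k + 1) * (1 - 2 * u) = (4 * u) ^ (k + 1) * (2 - 4 * u) / (2 * 4 ^ (k + 1)) := by
    rw [mul_pow]
    field_simp
    ring
  rw [e3]
  have hden : (0 : ℝ) < 2 * 4 ^ (k + 1) := by positivity
  have hpow : (2 : ℝ) * 4 ^ (k + 1) = 2 ^ (2 * k + 3) := by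
    rw [show (4 : ℝ) = 2 ^ 2 by norm_num, ← pow_mul, show 2 * (k + 1) = 2 * k + 2 by ring,
      ← pow_succ']
  calc (4 * u) ^ (k + 1) * (2 - 4 * u) / (2 * 4 ^ (k + 1)) ≤ 1 / (2 * 4 ^ (k + 1)) :=
        (div_le_div_iff_of_pos_right hden).mpr h4
    _ = (1 / 2) ^ (2 * k + 3) := by rw [hpow, ← one_div_pow]


lemma countEvenB (n : ℕ) :
    ((Finset.range n).filter (fun k => decide (Even k) = true)).card = (n + 1) / 2 := by
  have h : ((Finset.range n).filter (fun k => decide (Even k) = true))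
      = ((Finset.range n).filter (fun k => Even k)) :=
    Finset.filter_congr (fun x _ => by simp)
  rw [h, countEven]

lemma countPatB (j n : ℕ) (hn : j + 1 ≤ n) :
    ((Finset.range n).filter (fun k => decide (Even k ↔ k ≤ j) = true)).card
      = n / 2 + (if Even j then 1 else 0) := by
  have h : ((Finset.range n).filter (fun k => decide (Even k ↔ k ≤ j) = true))
      = ((Finset.range n).filter (fun k => Even k ↔ k ≤ j)) :=
    Finset.filter_congr (fun x _ => by simp)
  rw [h, countPat j n hn]

end EvoGameAux

lemma numInternalEquilibria_eq (d : ℕ) (b : Fin d → ℝ) :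
    numInternalEquilibria d b
      = Multiset.card (Multiset.filter (fun y => 0 < y) (EvoGameAux.Pb d b).roots) := rfl

set_option maxHeartbeats 1000000 in
/-- For a `d`-player two-strategy random evolutionary game with
`P(β_k > 0) = α` and `P(β_k < 0) = 1 − α`:
(i) `p_{d−1} ≤ (α(1−α))^{(d−1)/2}` if `d` is odd, `p_{d−1} ≤ 2(α(1−α))^{d/2}` if
`d` is even, and in both cases `p_{d−1} ≤ 1/2^{d−1}`;
(ii) if `d ≥ 3` is odd then `p_{d−2} ≤ (d−1)·(α(1−α))^{(d−1)/2}`;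
(iii) if `d ≥ 3` then `p_{d−2} ≤ (d−1)/2^{d−1}`. -/
theorem prob_internalEquilibria_upper_bounds_general
    {Ω : Type*} [MeasurableSpace Ω] (μ : Measure Ω) [IsProbabilityMeasure μ]
    (d : ℕ) (hd : 2 ≤ d) (α : ℝ) (hα : α ∈ Set.Icc (0 : ℝ) 1)
    (β : Fin d → Ω → ℝ)
    (hmeas : ∀ k, Measurable (β k))
    (hindep : iIndepFun β μ)
    (hpos : ∀ k, μ {ω | 0 < β k ω} = ENNReal.ofReal α)
    (hneg : ∀ k, μ {ω | β k ω < 0} = ENNReal.ofReal (1 - α)) :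
    ((Odd d →
        (μ {ω | numInternalEquilibria d (fun k => β k ω) = d - 1}).toReal ≤
          (α * (1 - α)) ^ ((d - 1) / 2)) ∧
      (Even d →
        (μ {ω | numInternalEquilibria d (fun k => β k ω) = d - 1}).toReal ≤
          2 * (α * (1 - α)) ^ (d / 2)) ∧
      (μ {ω | numInternalEquilibria d (fun k => β k ω) = d - 1}).toReal ≤
        1 / 2 ^ (d - 1)) ∧
    (3 ≤ d → Odd d →
      (μ {ω | numInternalEquilibria d (fun k => β k ω) = d - 2}).toReal ≤
        ((d : ℝ) - 1) * (α * (1 - α)) ^ ((d - 1) / 2)) ∧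
    (3 ≤ d →
      (μ {ω | numInternalEquilibria d (fun k => β k ω) = d - 2}).toReal ≤
        ((d : ℝ) - 1) / 2 ^ (d - 1)) := by
  obtain ⟨hα0, hα1⟩ := hα
  have hα1' : 0 ≤ 1 - α := by linarith
  set Au : (ℕ → Bool) → Set Ω := fun q =>
    ⋂ k : Fin d, β k ⁻¹' (if q (k : ℕ) then Set.Ioi (0 : ℝ) else Set.Iio 0) with hAu
  have measA : ∀ q : ℕ → Bool,
      μ (Au q) = ENNReal.ofReal (∏ k ∈ Finset.range d, if q k then α else 1 - α) := by
    intro q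
    have h1 : Au q = ⋂ k ∈ Finset.univ,
        β k ⁻¹' (fun i : Fin d => if q (i : ℕ) then Set.Ioi (0 : ℝ) else Set.Iio 0) k := by
      simp [hAu]
    rw [h1, hindep.measure_inter_preimage_eq_mul Finset.univ
      (fun i _ => by split <;> [exact measurableSet_Ioi; exact measurableSet_Iio])]
    have hfac : ∀ i : Fin d,
        μ (β i ⁻¹' (if q (i : ℕ) then Set.Ioi (0 : ℝ) else Set.Iio 0))
          = ENNReal.ofReal (if q (i : ℕ) then α else 1 - α) := by
      intro i
      by_cases h : q (i : ℕ)
      · rw [if_pos h, if_pos h, ← hpos i]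
        rfl
      · rw [if_neg h, if_neg h, ← hneg i]
        rfl
    rw [Finset.prod_congr rfl (fun i _ => hfac i)]
    rw [← ENNReal.ofReal_prod_of_nonneg (fun i _ => by split <;> [exact hα0; exact hα1'])]
    congr 1
    exact Fin.prod_univ_eq_prod_range (fun k => if q k then α else 1 - α) d
  have hnotcard : ∀ q : ℕ → Bool,
      ((Finset.range d).filter (fun k => ¬ (q k = true))).card
        = d - ((Finset.range d).filter (fun k => q k = true)).card := by
    intro q
    have := Finset.card_filter_add_card_filter_not
      (s := Finset.range d) (p := fun k => q k = true)
    rw [Finset.card_range] at this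
    omega
  have prodPat : ∀ q : ℕ → Bool,
      (∏ k ∈ Finset.range d, if q k then α else 1 - α)
        = α ^ ((Finset.range d).filter (fun k => q k = true)).card
          * (1 - α) ^ (d - ((Finset.range d).filter (fun k => q k = true)).card) := by
    intro q
    rw [Finset.prod_ite, Finset.prod_const, Finset.prod_const, hnotcard q]
  have hzero : ∀ k, μ {ω | β k ω = 0} = 0 := by
    intro k
    have hA : MeasurableSet {ω | 0 < β k ω} := measurableSet_lt measurable_const (hmeas k)
    have hB : MeasurableSet {ω | β k ω < 0} := measurableSet_lt (hmeas k) measurable_const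
    have hdisj : Disjoint {ω | 0 < β k ω} {ω | β k ω < 0} := by
      rw [Set.disjoint_left]
      intro ω h1 h2
      simp only [Set.mem_setOf_eq] at h1 h2
      linarith
    have hunion : μ ({ω | 0 < β k ω} ∪ {ω | β k ω < 0}) = 1 := by
      rw [measure_union hdisj hB, hpos k, hneg k,
        ← ENNReal.ofReal_add hα0 hα1']
      norm_num
    have hcompl : μ (({ω | 0 < β k ω} ∪ {ω | β k ω < 0})ᶜ) = 0 := by
      rw [prob_compl_eq_one_sub (hA.union hB), hunion]
      simp
    refine measure_mono_null ?_ hcompl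
    intro ω h
    simp only [Set.mem_setOf_eq] at h
    simp only [Set.mem_compl_iff, Set.mem_union, Set.mem_setOf_eq, h]
    push_neg
    exact ⟨le_refl 0, le_refl 0⟩
  have hZ : μ (⋃ k : Fin d, {ω | β k ω = 0}) = 0 :=
    measure_iUnion_null fun k => hzero k
  have mem_Au : ∀ (q : ℕ → Bool) (ω : Ω), (∀ k : Fin d, β k ω ≠ 0) →
      (∀ k : Fin d, 0 < β k ω ↔ q (k : ℕ) = true) → ω ∈ Au q := by
    intro q ω hne hiff
    simp only [hAu, Set.mem_iInter]
    intro k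
    by_cases h : q (k : ℕ)
    · rw [if_pos h]
      exact (hiff k).mpr h
    · rw [if_neg h]
      have h1 : ¬ 0 < β k ω := fun hc => h ((hiff k).mp hc)
      have : β k ω < 0 := lt_of_le_of_ne (not_lt.mp h1) (hne k)
      exact this
  have hxnn : ∀ a b : ℕ, 0 ≤ α ^ a * (1 - α) ^ b :=
    fun a b => mul_nonneg (pow_nonneg hα0 _) (pow_nonneg hα1' _)
  -- Part (i): inclusion and master bound
  have incl1 : {ω | numInternalEquilibria d (fun k => β k ω) = d - 1} ⊆
      (⋃ k : Fin d, {ω | β k ω = 0}) ∪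
        (Au (fun k => decide (Even k)) ∪ Au (fun k => !decide (Even k))) := by
    intro ω hω
    by_cases hz : ω ∈ ⋃ k : Fin d, {ω | β k ω = 0}
    · exact Or.inl hz
    · right
      have hne : ∀ k : Fin d, β k ω ≠ 0 := fun k hk => hz (Set.mem_iUnion.mpr ⟨k, hk⟩)
      have hω' : numInternalEquilibria d (fun k => β k ω) = d - 1 := hω
      rw [numInternalEquilibria_eq] at hω'
      have hnum := hω'
      have hpairs := EvoGameAux.det1 d hd (fun k => β k ω) hne hnum
      have hpat := EvoGameAux.pattern1
        (fun k => (EvoGameAux.Pb d (fun k => β k ω)).coeff k) d hpairs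
      have hsign : ∀ k : Fin d, 0 < β k ω ↔
          (Even (k : ℕ) ↔ 0 < (EvoGameAux.Pb d (fun k => β k ω)).coeff 0) := by
        intro k
        have h2 := EvoGameAux.coeff_Pb_pos_iff d (fun k => β k ω) (k : ℕ) k.isLt
        have h1 := hpat (k : ℕ) k.isLt
        simp only [Fin.eta] at h2
        exact h2.symm.trans h1
      by_cases h0 : 0 < (EvoGameAux.Pb d (fun k => β k ω)).coeff 0
      · refine Or.inl (mem_Au (fun k => decide (Even k)) ω hne (fun k => ?_))
        rw [hsign k, decide_eq_true_eq]
        tauto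
      · refine Or.inr (mem_Au (fun k => !decide (Even k)) ω hne (fun k => ?_))
        rw [hsign k, Bool.not_eq_true', decide_eq_false_iff_not]
        tauto
  have cardEvenD : ((Finset.range d).filter (fun k => decide (Even k) = true)).card
      = (d + 1) / 2 := EvoGameAux.countEvenB d
  have cardOddD : ((Finset.range d).filter (fun k => (!decide (Even k)) = true)).card
      = d - (d + 1) / 2 := by
    have h : ((Finset.range d).filter (fun k => (!decide (Even k)) = true))
        = ((Finset.range d).filter (fun k => ¬ (decide (Even k) = true))) :=
      Finset.filter_congr (fun x _ => by simp)
    rw [h, hnotcard (fun k => decide (Even k)), cardEvenD]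
  have hA1 : μ (Au (fun k => decide (Even k)))
      = ENNReal.ofReal (α ^ ((d + 1) / 2) * (1 - α) ^ (d - (d + 1) / 2)) := by
    rw [measA (fun k => decide (Even k)), prodPat (fun k => decide (Even k)), cardEvenD]
  have hA2 : μ (Au (fun k => !decide (Even k)))
      = ENNReal.ofReal (α ^ (d - (d + 1) / 2) * (1 - α) ^ ((d + 1) / 2)) := by
    have h1 : d - (d - (d + 1) / 2) = (d + 1) / 2 := by omega
    rw [measA (fun k => !decide (Even k)), prodPat (fun k => !decide (Even k)), cardOddD, h1]
  have master1 : μ {ω | numInternalEquilibria d (fun k => β k ω) = d - 1}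
      ≤ ENNReal.ofReal (α ^ ((d + 1) / 2) * (1 - α) ^ (d - (d + 1) / 2)
          + α ^ (d - (d + 1) / 2) * (1 - α) ^ ((d + 1) / 2)) := by
    calc μ {ω | numInternalEquilibria d (fun k => β k ω) = d - 1}
        ≤ μ ((⋃ k : Fin d, {ω | β k ω = 0}) ∪
            (Au (fun k => decide (Even k)) ∪ Au (fun k => !decide (Even k)))) :=
          measure_mono incl1
      _ ≤ μ (⋃ k : Fin d, {ω | β k ω = 0})
            + μ (Au (fun k => decide (Even k)) ∪ Au (fun k => !decide (Even k))) :=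
          measure_union_le _ _
      _ = μ (Au (fun k => decide (Even k)) ∪ Au (fun k => !decide (Even k))) := by
          rw [hZ, zero_add]
      _ ≤ μ (Au (fun k => decide (Even k))) + μ (Au (fun k => !decide (Even k))) :=
          measure_union_le _ _
      _ = ENNReal.ofReal (α ^ ((d + 1) / 2) * (1 - α) ^ (d - (d + 1) / 2)
            + α ^ (d - (d + 1) / 2) * (1 - α) ^ ((d + 1) / 2)) := by
          rw [hA1, hA2, ← ENNReal.ofReal_add (hxnn _ _) (hxnn _ _)]
  -- Part (ii)/(iii): master bound
  set cpat : ℕ → ℕ := fun j => d / 2 + (if Even j then 1 else 0) with hcpat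
  have hcle : ∀ j, cpat j ≤ d := by
    intro j
    simp only [hcpat]
    split <;> omega
  have master2 : 3 ≤ d → μ {ω | numInternalEquilibria d (fun k => β k ω) = d - 2}
      ≤ ENNReal.ofReal (∑ j ∈ Finset.range (d - 1),
          (α ^ cpat j * (1 - α) ^ (d - cpat j)
            + α ^ (d - cpat j) * (1 - α) ^ cpat j)) := by
    intro hd3
    have hcardPat : ∀ j, j + 1 < d →
        ((Finset.range d).filter (fun k => decide (Even k ↔ k ≤ j) = true)).card
          = cpat j := by
      intro j hj
      rw [EvoGameAux.countPatB j d (by omega)]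
    have hcardPat' : ∀ j, j + 1 < d →
        ((Finset.range d).filter (fun k => (!decide (Even k ↔ k ≤ j)) = true)).card
          = d - cpat j := by
      intro j hj
      have h : ((Finset.range d).filter (fun k => (!decide (Even k ↔ k ≤ j)) = true))
          = ((Finset.range d).filter (fun k => ¬ (decide (Even k ↔ k ≤ j) = true))) :=
        Finset.filter_congr (fun x _ => by simp)
      rw [h, hnotcard (fun k => decide (Even k ↔ k ≤ j)), hcardPat j hj]
    have hU1 : ∀ j, j + 1 < d → μ (Au (fun k => decide (Even k ↔ k ≤ j)))
        = ENNReal.ofReal (α ^ cpat j * (1 - α) ^ (d - cpat j)) := by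
      intro j hj
      rw [measA (fun k => decide (Even k ↔ k ≤ j)), prodPat (fun k => decide (Even k ↔ k ≤ j)),
        hcardPat j hj]
    have hU2 : ∀ j, j + 1 < d → μ (Au (fun k => !decide (Even k ↔ k ≤ j)))
        = ENNReal.ofReal (α ^ (d - cpat j) * (1 - α) ^ cpat j) := by
      intro j hj
      have h1 : d - (d - cpat j) = cpat j := by
        have := hcle j
        omega
      rw [measA (fun k => !decide (Even k ↔ k ≤ j)), prodPat (fun k => !decide (Even k ↔ k ≤ j)),
        hcardPat' j hj, h1]
    have incl2 : {ω | numInternalEquilibria d (fun k => β k ω) = d - 2} ⊆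
        (⋃ k : Fin d, {ω | β k ω = 0}) ∪
          ⋃ j ∈ Finset.range (d - 1),
            (Au (fun k => decide (Even k ↔ k ≤ j)) ∪
              Au (fun k => !decide (Even k ↔ k ≤ j))) := by
      intro ω hω
      by_cases hz : ω ∈ ⋃ k : Fin d, {ω | β k ω = 0}
      · exact Or.inl hz
      · right
        have hne : ∀ k : Fin d, β k ω ≠ 0 := fun k hk => hz (Set.mem_iUnion.mpr ⟨k, hk⟩)
        have hω' : numInternalEquilibria d (fun k => β k ω) = d - 2 := hω
        rw [numInternalEquilibria_eq] at hω'
        have hnum := hω'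
        obtain ⟨j, hj, hdef, halt⟩ := EvoGameAux.det2 d hd3 (fun k => β k ω) hne hnum
        have hpat := EvoGameAux.pattern2
          (fun k => (EvoGameAux.Pb d (fun k => β k ω)).coeff k) d j hj hdef halt
        have hsign : ∀ k : Fin d, 0 < β k ω ↔
            ((Even (k : ℕ) ↔ (k : ℕ) ≤ j) ↔
              0 < (EvoGameAux.Pb d (fun k => β k ω)).coeff 0) := by
          intro k
          have h2 := EvoGameAux.coeff_Pb_pos_iff d (fun k => β k ω) (k : ℕ) k.isLt
          have h1 := hpat (k : ℕ) k.isLt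
          simp only [Fin.eta] at h2
          exact h2.symm.trans h1
        refine Set.mem_iUnion₂.mpr ⟨j, Finset.mem_range.mpr (by omega), ?_⟩
        by_cases h0 : 0 < (EvoGameAux.Pb d (fun k => β k ω)).coeff 0
        · refine Or.inl (mem_Au (fun k => decide (Even k ↔ k ≤ j)) ω hne (fun k => ?_))
          rw [hsign k, decide_eq_true_eq]
          tauto
        · refine Or.inr (mem_Au (fun k => !decide (Even k ↔ k ≤ j)) ω hne (fun k => ?_))
          rw [hsign k, Bool.not_eq_true', decide_eq_false_iff_not]
          tauto
    calc μ {ω | numInternalEquilibria d (fun k => β k ω) = d - 2}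
        ≤ μ ((⋃ k : Fin d, {ω | β k ω = 0}) ∪
            ⋃ j ∈ Finset.range (d - 1),
              (Au (fun k => decide (Even k ↔ k ≤ j)) ∪
                Au (fun k => !decide (Even k ↔ k ≤ j)))) :=
          measure_mono incl2
      _ ≤ μ (⋃ k : Fin d, {ω | β k ω = 0})
            + μ (⋃ j ∈ Finset.range (d - 1),
              (Au (fun k => decide (Even k ↔ k ≤ j)) ∪
                Au (fun k => !decide (Even k ↔ k ≤ j)))) :=
          measure_union_le _ _
      _ = μ (⋃ j ∈ Finset.range (d - 1),
              (Au (fun k => decide (Even k ↔ k ≤ j)) ∪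
                Au (fun k => !decide (Even k ↔ k ≤ j)))) := by
          rw [hZ, zero_add]
      _ ≤ ∑ j ∈ Finset.range (d - 1),
            μ (Au (fun k => decide (Even k ↔ k ≤ j)) ∪
              Au (fun k => !decide (Even k ↔ k ≤ j))) :=
          measure_biUnion_finset_le _ _
      _ ≤ ∑ j ∈ Finset.range (d - 1),
            (ENNReal.ofReal (α ^ cpat j * (1 - α) ^ (d - cpat j))
              + ENNReal.ofReal (α ^ (d - cpat j) * (1 - α) ^ cpat j)) := by
          refine Finset.sum_le_sum (fun j hj => ?_)
          have hjd : j + 1 < d := by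
            have := Finset.mem_range.mp hj
            omega
          exact (measure_union_le _ _).trans_eq (by rw [hU1 j hjd, hU2 j hjd])
      _ = ∑ j ∈ Finset.range (d - 1),
            ENNReal.ofReal (α ^ cpat j * (1 - α) ^ (d - cpat j)
              + α ^ (d - cpat j) * (1 - α) ^ cpat j) :=
          Finset.sum_congr rfl (fun j _ => (ENNReal.ofReal_add (hxnn _ _) (hxnn _ _)).symm)
      _ = ENNReal.ofReal (∑ j ∈ Finset.range (d - 1),
            (α ^ cpat j * (1 - α) ^ (d - cpat j)
              + α ^ (d - cpat j) * (1 - α) ^ cpat j)) :=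
          (ENNReal.ofReal_sum_of_nonneg (fun j _ => add_nonneg (hxnn _ _) (hxnn _ _))).symm
  -- odd-d summand value
  have hsummand_odd : ∀ t : ℕ, d = 2 * t + 1 → ∀ j : ℕ,
      α ^ cpat j * (1 - α) ^ (d - cpat j) + α ^ (d - cpat j) * (1 - α) ^ cpat j
        = (α * (1 - α)) ^ t := by
    intro t ht j
    by_cases hEj : Even j
    · have hcj : cpat j = t + 1 := by
        simp only [hcpat]
        rw [if_pos hEj]
        omega
      rw [hcj, show d - (t + 1) = t by omega, EvoGameAux.realA α (1 - α) t,
        show α + (1 - α) = 1 by ring, mul_one]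
    · have hcj : cpat j = t := by
        simp only [hcpat]
        rw [if_neg hEj]
        omega
      rw [hcj, show d - t = t + 1 by omega, add_comm, EvoGameAux.realA α (1 - α) t,
        show α + (1 - α) = 1 by ring, mul_one]
  -- the five goals
  have g1 : Odd d →
      (μ {ω | numInternalEquilibria d (fun k => β k ω) = d - 1}).toReal ≤
        (α * (1 - α)) ^ ((d - 1) / 2) := by
    intro hodd
    obtain ⟨t, ht⟩ := hodd
    apply ENNReal.toReal_le_of_le_ofReal (pow_nonneg (mul_nonneg hα0 hα1') _)
    refine master1.trans (ENNReal.ofReal_le_ofReal ?_)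
    rw [show d - (d + 1) / 2 = t by omega, show (d + 1) / 2 = t + 1 by omega,
      show (d - 1) / 2 = t by omega, EvoGameAux.realA α (1 - α) t,
      show α + (1 - α) = 1 by ring, mul_one]
  have g2 : Even d →
      (μ {ω | numInternalEquilibria d (fun k => β k ω) = d - 1}).toReal ≤
        2 * (α * (1 - α)) ^ (d / 2) := by
    intro heven
    obtain ⟨m, hm⟩ := heven
    apply ENNReal.toReal_le_of_le_ofReal
      (mul_nonneg (by norm_num) (pow_nonneg (mul_nonneg hα0 hα1') _))
    refine master1.trans (ENNReal.ofReal_le_ofReal ?_)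
    rw [show d - (d + 1) / 2 = m by omega, show (d + 1) / 2 = m by omega,
      show d / 2 = m by omega]
    have : α ^ m * (1 - α) ^ m + α ^ m * (1 - α) ^ m = 2 * (α * (1 - α)) ^ m := by
      rw [mul_pow]; ring
    linarith
  have g3 : (μ {ω | numInternalEquilibria d (fun k => β k ω) = d - 1}).toReal ≤
      1 / 2 ^ (d - 1) := by
    rcases Nat.even_or_odd d with he | ho
    · obtain ⟨m, hm⟩ := he
      have hb := EvoGameAux.realB α hα0 hα1 m
      calc (μ {ω | numInternalEquilibria d (fun k => β k ω) = d - 1}).toReal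
          ≤ 2 * (α * (1 - α)) ^ (d / 2) := g2 ⟨m, hm⟩
        _ = 2 * (α * (1 - α)) ^ m := by rw [show d / 2 = m by omega]
        _ ≤ 2 * (1 / 2) ^ (2 * m) := by linarith
        _ = (1 / 2) ^ (d - 1) := by
            rw [show 2 * m = (d - 1) + 1 by omega, pow_succ]; ring
        _ = 1 / 2 ^ (d - 1) := by rw [div_pow, one_pow]
    · obtain ⟨t, ht⟩ := ho
      have hb := EvoGameAux.realB α hα0 hα1 t
      calc (μ {ω | numInternalEquilibria d (fun k => β k ω) = d - 1}).toReal
          ≤ (α * (1 - α)) ^ ((d - 1) / 2) := g1 ⟨t, ht⟩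
        _ = (α * (1 - α)) ^ t := by rw [show (d - 1) / 2 = t by omega]
        _ ≤ (1 / 2) ^ (2 * t) := hb
        _ = 1 / 2 ^ (d - 1) := by
            rw [show 2 * t = d - 1 by omega, div_pow, one_pow]
  have g4 : 3 ≤ d → Odd d →
      (μ {ω | numInternalEquilibria d (fun k => β k ω) = d - 2}).toReal ≤
        ((d : ℝ) - 1) * (α * (1 - α)) ^ ((d - 1) / 2) := by
    intro hd3 hodd
    obtain ⟨t, ht⟩ := hodd
    have hdr : (3 : ℝ) ≤ (d : ℝ) := by exact_mod_cast hd3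
    apply ENNReal.toReal_le_of_le_ofReal
      (mul_nonneg (by linarith) (pow_nonneg (mul_nonneg hα0 hα1') _))
    refine (master2 hd3).trans (ENNReal.ofReal_le_ofReal (le_of_eq ?_))
    calc ∑ j ∈ Finset.range (d - 1),
          (α ^ cpat j * (1 - α) ^ (d - cpat j) + α ^ (d - cpat j) * (1 - α) ^ cpat j)
        = ∑ _j ∈ Finset.range (d - 1), (α * (1 - α)) ^ t :=
          Finset.sum_congr rfl (fun j _ => hsummand_odd t ht j)
      _ = ((d - 1 : ℕ) : ℝ) * (α * (1 - α)) ^ t := by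
          rw [Finset.sum_const, Finset.card_range, nsmul_eq_mul]
      _ = ((d : ℝ) - 1) * (α * (1 - α)) ^ ((d - 1) / 2) := by
          rw [show (d - 1) / 2 = t by omega, Nat.cast_sub (by omega), Nat.cast_one]
  have g5 : 3 ≤ d →
      (μ {ω | numInternalEquilibria d (fun k => β k ω) = d - 2}).toReal ≤
        ((d : ℝ) - 1) / 2 ^ (d - 1) := by
    intro hd3
    have hdr : (3 : ℝ) ≤ (d : ℝ) := by exact_mod_cast hd3
    apply ENNReal.toReal_le_of_le_ofReal
      (div_nonneg (by linarith) (by positivity))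
    refine (master2 hd3).trans (ENNReal.ofReal_le_ofReal ?_)
    have hbound : ∀ j ∈ Finset.range (d - 1),
        α ^ cpat j * (1 - α) ^ (d - cpat j) + α ^ (d - cpat j) * (1 - α) ^ cpat j
          ≤ (1 / 2 : ℝ) ^ (d - 1) := by
      intro j _
      rcases Nat.even_or_odd d with hEd | hOd
      · obtain ⟨m, hm⟩ := hEd
        by_cases hEj : Even j
        · have hcj : cpat j = m + 1 := by
            simp only [hcpat]
            rw [if_pos hEj]
            omega
          have hm2 : 2 ≤ m := by omega
          obtain ⟨k, hk⟩ : ∃ k, m = k + 2 := ⟨m - 2, by omega⟩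
          rw [hcj, show d - (m + 1) = k + 1 by omega, show m + 1 = k + 3 by omega]
          have he : α ^ (k + 3) * (1 - α) ^ (k + 1) + α ^ (k + 1) * (1 - α) ^ (k + 3)
              = (α * (1 - α)) ^ (k + 1) * (1 - 2 * (α * (1 - α))) := by
            rw [mul_pow]; ring
          rw [he]
          have hrc := EvoGameAux.realC (α * (1 - α)) (mul_nonneg hα0 hα1')
            (by nlinarith [sq_nonneg (2 * α - 1)]) k
          calc (α * (1 - α)) ^ (k + 1) * (1 - 2 * (α * (1 - α)))
              ≤ (1 / 2) ^ (2 * k + 3) := hrc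
            _ = (1 / 2 : ℝ) ^ (d - 1) := by rw [show 2 * k + 3 = d - 1 by omega]
        · have hcj : cpat j = m := by
            simp only [hcpat]
            rw [if_neg hEj]
            omega
          rw [hcj, show d - m = m by omega]
          have hb := EvoGameAux.realB α hα0 hα1 m
          have he : α ^ m * (1 - α) ^ m + α ^ m * (1 - α) ^ m
              = 2 * (α * (1 - α)) ^ m := by rw [mul_pow]; ring
          have h2m : (2 : ℝ) * (1 / 2) ^ (2 * m) = (1 / 2) ^ (d - 1) := by
            rw [show 2 * m = (d - 1) + 1 by omega, pow_succ]; ring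
          linarith
      · obtain ⟨t, ht⟩ := hOd
        rw [hsummand_odd t ht j]
        have hb := EvoGameAux.realB α hα0 hα1 t
        calc (α * (1 - α)) ^ t ≤ (1 / 2) ^ (2 * t) := hb
          _ = (1 / 2 : ℝ) ^ (d - 1) := by rw [show 2 * t = d - 1 by omega]
    calc ∑ j ∈ Finset.range (d - 1),
          (α ^ cpat j * (1 - α) ^ (d - cpat j) + α ^ (d - cpat j) * (1 - α) ^ cpat j)
        ≤ ∑ _j ∈ Finset.range (d - 1), (1 / 2 : ℝ) ^ (d - 1) :=
          Finset.sum_le_sum hbound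
      _ = ((d - 1 : ℕ) : ℝ) * (1 / 2) ^ (d - 1) := by
          rw [Finset.sum_const, Finset.card_range, nsmul_eq_mul]
      _ = ((d : ℝ) - 1) / 2 ^ (d - 1) := by
          rw [Nat.cast_sub (by omega), Nat.cast_one, div_pow, one_pow, mul_one_div]
  exact ⟨⟨g1, g2, g3⟩, g4, g5⟩
end

section
/- Let α ∈ [0,1] and let β_0, …, β_{d−1} be independent real-valued random variables with P(β_k > 0) = α and P(β_k < 0) = 1 − α for every k, and let p_m be the probability that P(y) = Σ_{k=0}^{d−1} β_k·C(d−1,k)·y^k has exactly m roots in (0, ∞) counted with multiplicity. Then: for d = 2, p_0 = α² + (1−α)² and p_1 = 2α(1−α); and for d = 3, p_1 = 2α(1−α). -/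
open MeasureTheory ProbabilityTheory Polynomial

lemma quad_factor (a b c r1 r2 : ℝ) (h1 : a * (r1 + r2) = -b) (h2 : a * (r1 * r2) = c) :
    C a * X ^ 2 + C b * X + C c = C a * (X - C r1) * (X - C r2) := by
  have hb : b = -(a * (r1 + r2)) := by linarith
  subst hb; rw [← h2]
  simp only [map_add, map_mul, map_neg]
  ring

lemma quad_roots (a b c : ℝ) (ha : a ≠ 0) (hd : 0 ≤ discrim a b c) :
    ∃ r1 r2 : ℝ, (C a * X ^ 2 + C b * X + C c).roots = {r1, r2} ∧
      r1 * r2 = c / a := by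
  set s := Real.sqrt (discrim a b c) with hs
  have hs2 : s ^ 2 = b ^ 2 - 4 * a * c := by
    rw [hs, Real.sq_sqrt hd, discrim]
  have e1 : a * ((-b + s) / (2 * a) + (-b - s) / (2 * a)) = -b := by
    field_simp; ring
  have e2 : a * ((-b + s) / (2 * a) * ((-b - s) / (2 * a))) = c := by
    field_simp; linear_combination (-1 : ℝ) * hs2
  refine ⟨(-b + s) / (2 * a), (-b - s) / (2 * a), ?_, ?_⟩
  · rw [quad_factor a b c _ _ e1 e2, mul_assoc,
      roots_C_mul _ ha, roots_mul
        (mul_ne_zero (X_sub_C_ne_zero _) (X_sub_C_ne_zero _)),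
      roots_X_sub_C, roots_X_sub_C]
    rfl
  · field_simp; linear_combination (-1 : ℝ) * hs2

lemma quad_no_roots (a b c : ℝ) (hd : discrim a b c < 0) :
    (C a * X ^ 2 + C b * X + C c).roots = 0 := by
  rw [Multiset.eq_zero_iff_forall_notMem]
  intro x hx
  have h := (mem_roots'.1 hx).2
  have hev : a * (x * x) + b * x + c = 0 := by
    have h' : a * x ^ 2 + b * x + c = 0 := by simpa using h
    linear_combination h'
  exact quadratic_ne_zero_of_discrim_ne_sq
    (fun s => by nlinarith [sq_nonneg s]) x hev

lemma sign_div_neg (a b : ℝ) : a / b < 0 ↔ a * b < 0 := by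
  rw [div_neg_iff, mul_neg_iff]

lemma sign_div_pos (a b : ℝ) : 0 < a / b ↔ 0 < a * b := by
  rw [div_pos_iff, mul_pos_iff]

lemma num2 (f : Fin 2 → ℝ) (h0 : f 0 ≠ 0) (h1 : f 1 ≠ 0) :
    (numInternalEquilibria 2 f = 0 ↔ 0 < f 0 * f 1) ∧
    (numInternalEquilibria 2 f = 1 ↔ f 0 * f 1 < 0) := by
  have hp : (∑ k : Fin 2, C (f k * ((2 - 1).choose (k : ℕ) : ℝ)) * X ^ (k : ℕ))
      = C (f 1) * (X - C (-(f 0) / f 1)) := by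
    have hs : f 1 * (-(f 0) / f 1) = -(f 0) := by field_simp
    rw [mul_sub, ← C_mul, hs]
    simp [Fin.sum_univ_two]
    ring
  unfold numInternalEquilibria
  rw [hp, roots_C_mul _ h1, roots_X_sub_C]
  have hposiff : 0 < -(f 0) / f 1 ↔ f 0 * f 1 < 0 := by
    rw [show (0:ℝ) < -(f 0) / f 1 ↔ f 0 / f 1 < 0 by rw [neg_div]; exact neg_pos,
      sign_div_neg]
  by_cases hc : 0 < -(f 0) / f 1
  · have := hposiff.1 hc
    simp [Multiset.filter_singleton, hc, this]
    nlinarith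
  · have h1' : ¬ f 0 * f 1 < 0 := fun h => hc (hposiff.2 h)
    have : 0 < f 0 * f 1 := by
      rcases (mul_ne_zero h0 h1).lt_or_gt with h | h
      · exact absurd h h1'
      · exact h
    simp [Multiset.filter_singleton, hc, this, h1']

lemma num3 (f : Fin 3 → ℝ) (h0 : f 0 ≠ 0) (h2 : f 2 ≠ 0) :
    numInternalEquilibria 3 f = 1 ↔ f 0 * f 2 < 0 := by
  have hp : (∑ k : Fin 3, C (f k * ((3 - 1).choose (k : ℕ) : ℝ)) * X ^ (k : ℕ))
      = C (f 2) * X ^ 2 + C (f 1 * 2) * X + C (f 0) := by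
    simp [Fin.sum_univ_three, C_mul, map_ofNat]
    ring
  unfold numInternalEquilibria
  rw [hp]
  rcases (mul_ne_zero h0 h2).lt_or_gt with hlt | hgt
  · have hd : 0 ≤ discrim (f 2) (f 1 * 2) (f 0) := by
      unfold discrim; nlinarith [sq_nonneg (f 1 * 2)]
    obtain ⟨r1, r2, hroots, hprod⟩ := quad_roots _ _ _ h2 hd
    rw [hroots]
    have hq : r1 * r2 < 0 := by
      rw [hprod, sign_div_neg]; linarith [hlt]
    simp only [hlt, iff_true]
    rcases mul_neg_iff.1 hq with ⟨ha, hb⟩ | ⟨ha, hb⟩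
    · simp [Multiset.insert_eq_cons, Multiset.filter_cons, Multiset.filter_singleton,
        ha, hb, not_lt.2 hb.le]
    · simp [Multiset.insert_eq_cons, Multiset.filter_cons, Multiset.filter_singleton,
        hb, not_lt.2 ha.le]
  · simp only [not_lt.2 hgt.le, iff_false]
    rcases lt_or_ge (discrim (f 2) (f 1 * 2) (f 0)) 0 with hdlt | hd
    · rw [quad_no_roots _ _ _ hdlt]
      simp
    · obtain ⟨r1, r2, hroots, hprod⟩ := quad_roots _ _ _ h2 hd
      rw [hroots]
      have hq : 0 < r1 * r2 := by
        rw [hprod, sign_div_pos]; linarith [hgt]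
      rcases mul_pos_iff.1 hq with ⟨ha, hb⟩ | ⟨ha, hb⟩
      · simp [Multiset.insert_eq_cons, Multiset.filter_cons, Multiset.filter_singleton,
          ha, hb]
      · simp [Multiset.insert_eq_cons, Multiset.filter_cons, Multiset.filter_singleton,
          not_lt.2 ha.le, not_lt.2 hb.le]

section Prob

variable {Ω : Type*} [MeasurableSpace Ω] (μ : Measure Ω) [IsProbabilityMeasure μ]

lemma zero_null (g : Ω → ℝ) (hg : Measurable g) (α : ℝ) (hα : α ∈ Set.Icc (0:ℝ) 1)
    (hgp : μ {ω | 0 < g ω} = ENNReal.ofReal α)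
    (hgn : μ {ω | g ω < 0} = ENNReal.ofReal (1 - α)) :
    μ {ω | g ω = 0} = 0 := by
  obtain ⟨hα0, hα1⟩ := hα
  have hdis : Disjoint {ω | 0 < g ω} {ω | g ω < 0} := by
    rw [Set.disjoint_left]
    intro ω h1 h2
    simp only [Set.mem_setOf_eq] at h1 h2
    linarith
  have hm1 : MeasurableSet {ω | 0 < g ω} := hg measurableSet_Ioi
  have hm2 : MeasurableSet {ω | g ω < 0} := hg measurableSet_Iio
  have hU : μ ({ω | 0 < g ω} ∪ {ω | g ω < 0}) = 1 := by
    rw [measure_union hdis hm2, hgp, hgn, ← ENNReal.ofReal_add hα0 (by linarith)]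
    simp
  have hsub : {ω | g ω = 0} ⊆ ({ω | 0 < g ω} ∪ {ω | g ω < 0})ᶜ := by
    intro ω hω
    have hz : g ω = 0 := hω
    simp [Set.mem_union, hz]
  refine measure_mono_null hsub ?_
  rw [measure_compl (hm1.union hm2) (measure_ne_top μ _), hU]
  simp

lemma prob_mul_neg (g h : Ω → ℝ) (hg : Measurable g) (hh : Measurable h)
    (hind : IndepFun g h μ) (α : ℝ) (hα : α ∈ Set.Icc (0:ℝ) 1)
    (hgp : μ {ω | 0 < g ω} = ENNReal.ofReal α)
    (hgn : μ {ω | g ω < 0} = ENNReal.ofReal (1 - α))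
    (hhp : μ {ω | 0 < h ω} = ENNReal.ofReal α)
    (hhn : μ {ω | h ω < 0} = ENNReal.ofReal (1 - α)) :
    (μ {ω | g ω * h ω < 0}).toReal = 2 * α * (1 - α) := by
  obtain ⟨hα0, hα1⟩ := hα
  have hset : {ω | g ω * h ω < 0}
      = (g ⁻¹' Set.Ioi 0 ∩ h ⁻¹' Set.Iio 0) ∪ (g ⁻¹' Set.Iio 0 ∩ h ⁻¹' Set.Ioi 0) := by
    ext ω
    simp only [Set.mem_setOf_eq, Set.mem_union, Set.mem_inter_iff, Set.mem_preimage,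
      Set.mem_Ioi, Set.mem_Iio]
    exact mul_neg_iff
  have hdis : Disjoint (g ⁻¹' Set.Ioi 0 ∩ h ⁻¹' Set.Iio 0)
      (g ⁻¹' Set.Iio 0 ∩ h ⁻¹' Set.Ioi 0) := by
    rw [Set.disjoint_left]
    rintro ω ⟨h1, _⟩ ⟨h2, _⟩
    simp only [Set.mem_preimage, Set.mem_Ioi, Set.mem_Iio] at h1 h2
    linarith
  have e1 := hind.measure_inter_preimage_eq_mul (Set.Ioi 0) (Set.Iio 0)
    measurableSet_Ioi measurableSet_Iio
  have e2 := hind.measure_inter_preimage_eq_mul (Set.Iio 0) (Set.Ioi 0)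
    measurableSet_Iio measurableSet_Ioi
  rw [hset, measure_union hdis ((hg measurableSet_Iio).inter (hh measurableSet_Ioi)), e1, e2]
  have hgp' : μ (g ⁻¹' Set.Ioi 0) = ENNReal.ofReal α := hgp
  have hgn' : μ (g ⁻¹' Set.Iio 0) = ENNReal.ofReal (1 - α) := hgn
  have hhp' : μ (h ⁻¹' Set.Ioi 0) = ENNReal.ofReal α := hhp
  have hhn' : μ (h ⁻¹' Set.Iio 0) = ENNReal.ofReal (1 - α) := hhn
  rw [hgp', hgn', hhp', hhn', ← ENNReal.ofReal_mul hα0, ← ENNReal.ofReal_mul (by linarith),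
    ← ENNReal.ofReal_add (by nlinarith) (by nlinarith), ENNReal.toReal_ofReal (by nlinarith)]
  ring

lemma prob_mul_pos (g h : Ω → ℝ) (hg : Measurable g) (hh : Measurable h)
    (hind : IndepFun g h μ) (α : ℝ) (hα : α ∈ Set.Icc (0:ℝ) 1)
    (hgp : μ {ω | 0 < g ω} = ENNReal.ofReal α)
    (hgn : μ {ω | g ω < 0} = ENNReal.ofReal (1 - α))
    (hhp : μ {ω | 0 < h ω} = ENNReal.ofReal α)
    (hhn : μ {ω | h ω < 0} = ENNReal.ofReal (1 - α)) :
    (μ {ω | 0 < g ω * h ω}).toReal = α ^ 2 + (1 - α) ^ 2 := by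
  obtain ⟨hα0, hα1⟩ := hα
  have hset : {ω | 0 < g ω * h ω}
      = (g ⁻¹' Set.Ioi 0 ∩ h ⁻¹' Set.Ioi 0) ∪ (g ⁻¹' Set.Iio 0 ∩ h ⁻¹' Set.Iio 0) := by
    ext ω
    simp only [Set.mem_setOf_eq, Set.mem_union, Set.mem_inter_iff, Set.mem_preimage,
      Set.mem_Ioi, Set.mem_Iio]
    exact mul_pos_iff
  have hdis : Disjoint (g ⁻¹' Set.Ioi 0 ∩ h ⁻¹' Set.Ioi 0)
      (g ⁻¹' Set.Iio 0 ∩ h ⁻¹' Set.Iio 0) := by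
    rw [Set.disjoint_left]
    rintro ω ⟨h1, _⟩ ⟨h2, _⟩
    simp only [Set.mem_preimage, Set.mem_Ioi, Set.mem_Iio] at h1 h2
    linarith
  have e1 := hind.measure_inter_preimage_eq_mul (Set.Ioi 0) (Set.Ioi 0)
    measurableSet_Ioi measurableSet_Ioi
  have e2 := hind.measure_inter_preimage_eq_mul (Set.Iio 0) (Set.Iio 0)
    measurableSet_Iio measurableSet_Iio
  rw [hset, measure_union hdis ((hg measurableSet_Iio).inter (hh measurableSet_Iio)), e1, e2]
  have hgp' : μ (g ⁻¹' Set.Ioi 0) = ENNReal.ofReal α := hgp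
  have hgn' : μ (g ⁻¹' Set.Iio 0) = ENNReal.ofReal (1 - α) := hgn
  have hhp' : μ (h ⁻¹' Set.Ioi 0) = ENNReal.ofReal α := hhp
  have hhn' : μ (h ⁻¹' Set.Iio 0) = ENNReal.ofReal (1 - α) := hhn
  rw [hgp', hgn', hhp', hhn', ← ENNReal.ofReal_mul hα0, ← ENNReal.ofReal_mul (by linarith),
    ← ENNReal.ofReal_add (by nlinarith) (by nlinarith), ENNReal.toReal_ofReal (by nlinarith)]
  ring

end Prob

/-- For a `d`-player two-strategy random evolutionary game with
`P(β_k > 0) = α` and `P(β_k < 0) = 1 − α`: for `d = 2`, `p_0 = α² + (1−α)²` and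
`p_1 = 2α(1−α)`; and for `d = 3`, `p_1 = 2α(1−α)`. -/
theorem prob_internalEquilibria_small_d_general
    {Ω : Type*} [MeasurableSpace Ω] (μ : Measure Ω) [IsProbabilityMeasure μ]
    (d : ℕ) (hd : 2 ≤ d) (α : ℝ) (hα : α ∈ Set.Icc (0 : ℝ) 1)
    (β : Fin d → Ω → ℝ)
    (hmeas : ∀ k, Measurable (β k))
    (hindep : iIndepFun β μ)
    (hpos : ∀ k, μ {ω | 0 < β k ω} = ENNReal.ofReal α)
    (hneg : ∀ k, μ {ω | β k ω < 0} = ENNReal.ofReal (1 - α)) :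
    (d = 2 →
      (μ {ω | numInternalEquilibria d (fun k => β k ω) = 0}).toReal =
          α ^ 2 + (1 - α) ^ 2 ∧
        (μ {ω | numInternalEquilibria d (fun k => β k ω) = 1}).toReal =
          2 * α * (1 - α)) ∧
    (d = 3 →
      (μ {ω | numInternalEquilibria d (fun k => β k ω) = 1}).toReal =
        2 * α * (1 - α)) := by
  have hzero : ∀ k, μ {ω | β k ω = 0} = 0 :=
    fun k => zero_null μ (β k) (hmeas k) α hα (hpos k) (hneg k)
  have hae : ∀ k, ∀ᵐ ω ∂μ, β k ω ≠ 0 := by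
    intro k
    rw [ae_iff]
    simpa using hzero k
  constructor
  · rintro rfl
    have hind01 : IndepFun (β 0) (β 1) μ :=
      hindep.indepFun (by decide : (0 : Fin 2) ≠ 1)
    have haeq0 : {ω | numInternalEquilibria 2 (fun k => β k ω) = 0}
        =ᵐ[μ] {ω | 0 < β 0 ω * β 1 ω} := by
      rw [Filter.eventuallyEq_set]
      filter_upwards [hae 0, hae 1] with ω h0 h1
      simpa using (num2 (fun k => β k ω) h0 h1).1
    have haeq1 : {ω | numInternalEquilibria 2 (fun k => β k ω) = 1}
        =ᵐ[μ] {ω | β 0 ω * β 1 ω < 0} := by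
      rw [Filter.eventuallyEq_set]
      filter_upwards [hae 0, hae 1] with ω h0 h1
      simpa using (num2 (fun k => β k ω) h0 h1).2
    constructor
    · rw [measure_congr haeq0]
      exact prob_mul_pos μ (β 0) (β 1) (hmeas 0) (hmeas 1) hind01 α hα
        (hpos 0) (hneg 0) (hpos 1) (hneg 1)
    · rw [measure_congr haeq1]
      exact prob_mul_neg μ (β 0) (β 1) (hmeas 0) (hmeas 1) hind01 α hα
        (hpos 0) (hneg 0) (hpos 1) (hneg 1)
  · rintro rfl
    have hind02 : IndepFun (β 0) (β 2) μ :=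
      hindep.indepFun (by decide : (0 : Fin 3) ≠ 2)
    have haeq1 : {ω | numInternalEquilibria 3 (fun k => β k ω) = 1}
        =ᵐ[μ] {ω | β 0 ω * β 2 ω < 0} := by
      rw [Filter.eventuallyEq_set]
      filter_upwards [hae 0, hae 2] with ω h0 h2
      simpa using num3 (fun k => β k ω) h0 h2
    rw [measure_congr haeq1]
    exact prob_mul_neg μ (β 0) (β 2) (hmeas 0) (hmeas 2) hind02 α hα
      (hpos 0) (hneg 0) (hpos 2) (hneg 2)
end
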